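/- Every 4-regular graph of girth exactly 6 has Grundy number 5. -/

import Mathlib

variable {V : Type*}

/-- `c` is a Grundy coloring of `G`: a proper coloring with positive integer
colors in which every vertex of color `i` has, for each `1 ≤ j < i`, a neighbor
of color `j`. -/
def IsGrundyColoring (G : SimpleGraph V) (c : V → ℕ) : Prop :=
  (∀ v, 1 ≤ c v) ∧
  (∀ v w, G.Adj v w → c v ≠ c w) ∧
  (∀ v j, 1 ≤ j → j < c v → ∃ u, G.Adj v u ∧ c u = j)

/-- `c` is a Grundy `k`-coloring of `G`: a Grundy coloring using exactly the
colors `1, …, k` (surjectively). -/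
def IsGrundyKColoring (G : SimpleGraph V) (c : V → ℕ) (k : ℕ) : Prop :=
  IsGrundyColoring G c ∧ (∀ v, c v ≤ k) ∧ (∀ j, 1 ≤ j → j ≤ k → ∃ v, c v = j)

/-- `G` admits a Grundy `k`-coloring. -/
def GrundyColorable (G : SimpleGraph V) (k : ℕ) : Prop :=
  ∃ c : V → ℕ, IsGrundyKColoring G c k

/-- The Grundy number of `G`: the largest `k` such that `G` admits a Grundy
`k`-coloring. -/
noncomputable def grundy (G : SimpleGraph V) : ℕ :=
  sSup {k | GrundyColorable G k}

/-- `X` is an independent module of `G`: an independent set of vertices all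
having the same neighborhood. -/
def IndepModule (G : SimpleGraph V) (X : Set V) : Prop :=
  (∀ x ∈ X, ∀ y ∈ X, ¬ G.Adj x y) ∧
  (∀ x ∈ X, ∀ y ∈ X, ∀ z, G.Adj x z ↔ G.Adj y z)

/-- The neighborhood of `v` in `G` can be partitioned into `n` independent
modules of `G`. -/
def NbhdPartition (G : SimpleGraph V) (v : V) (n : ℕ) : Prop :=
  ∃ M : Fin n → Set V, (∀ i, IndepModule G (M i)) ∧
    (∀ i j, i ≠ j → Disjoint (M i) (M j)) ∧
    (⋃ i, M i) = G.neighborSet v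

/-- `G` contains an induced 4-cycle. -/
def HasInducedC4 (G : SimpleGraph V) : Prop :=
  ∃ a b c d : V, a ≠ b ∧ a ≠ c ∧ a ≠ d ∧ b ≠ c ∧ b ≠ d ∧ c ≠ d ∧
    G.Adj a b ∧ G.Adj b c ∧ G.Adj c d ∧ G.Adj d a ∧ ¬ G.Adj a c ∧ ¬ G.Adj b d

/-- `G` admits a partial Grundy `k`-coloring: a surjective proper coloring with
colors `1, …, k` such that every color class `j` contains a vertex having, for
each `1 ≤ i < j`, a neighbor of color `i`. -/
def PartialGrundyColorable (G : SimpleGraph V) (k : ℕ) : Prop :=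
  ∃ c : V → ℕ, (∀ v, 1 ≤ c v ∧ c v ≤ k) ∧
    (∀ v w, G.Adj v w → c v ≠ c w) ∧
    (∀ j, 1 ≤ j → j ≤ k →
      ∃ v, c v = j ∧ ∀ i, 1 ≤ i → i < j → ∃ u, G.Adj v u ∧ c u = i)

/-- The partial Grundy number of `G`. -/
noncomputable def partialGrundy (G : SimpleGraph V) : ℕ :=
  sSup {k | PartialGrundyColorable G k}


section GrundyAux

open SimpleGraph Finset

variable {G : SimpleGraph V}

-- selection helpers
lemma two_of [Fintype V] (G : SimpleGraph V) [DecidableRel G.Adj] {u a b : V}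
    (hdeg : G.degree u = 4) (ha : G.Adj u a) (hb : G.Adj u b) (hab : a ≠ b) :
    ∃ p q : V, p ≠ q ∧ G.Adj u p ∧ G.Adj u q ∧ p ≠ a ∧ p ≠ b ∧ q ≠ a ∧ q ≠ b := by
  classical
  have hmem_a : a ∈ G.neighborFinset u := by rwa [SimpleGraph.mem_neighborFinset]
  have hmem_b : b ∈ (G.neighborFinset u).erase a :=
    Finset.mem_erase.mpr ⟨hab.symm, by rwa [SimpleGraph.mem_neighborFinset]⟩
  have hcard : (((G.neighborFinset u).erase a).erase b).card = 2 := by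
    rw [Finset.card_erase_of_mem hmem_b, Finset.card_erase_of_mem hmem_a]
    rw [← SimpleGraph.card_neighborFinset_eq_degree] at hdeg
    omega
  obtain ⟨p, q, hpq, hs⟩ := Finset.card_eq_two.mp hcard
  have hp : p ∈ ((G.neighborFinset u).erase a).erase b := by rw [hs]; simp
  have hq : q ∈ ((G.neighborFinset u).erase a).erase b := by rw [hs]; simp
  simp only [Finset.mem_erase, SimpleGraph.mem_neighborFinset] at hp hq
  exact ⟨p, q, hpq, hp.2.2, hq.2.2, hp.2.1, hp.1, hq.2.1, hq.1⟩

lemma three_of [Fintype V] (G : SimpleGraph V) [DecidableRel G.Adj] {u a : V}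
    (hdeg : G.degree u = 4) (ha : G.Adj u a) :
    ∃ p q r : V, p ≠ q ∧ p ≠ r ∧ q ≠ r ∧ G.Adj u p ∧ G.Adj u q ∧ G.Adj u r ∧
      p ≠ a ∧ q ≠ a ∧ r ≠ a := by
  classical
  have hmem_a : a ∈ G.neighborFinset u := by rwa [SimpleGraph.mem_neighborFinset]
  have hcard : ((G.neighborFinset u).erase a).card = 3 := by
    rw [Finset.card_erase_of_mem hmem_a]
    rw [← SimpleGraph.card_neighborFinset_eq_degree] at hdeg
    omega
  obtain ⟨p, q, r, hpq, hpr, hqr, hs⟩ := Finset.card_eq_three.mp hcard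
  have hp : p ∈ (G.neighborFinset u).erase a := by rw [hs]; simp
  have hq : q ∈ (G.neighborFinset u).erase a := by rw [hs]; simp
  have hr : r ∈ (G.neighborFinset u).erase a := by rw [hs]; simp
  simp only [Finset.mem_erase, SimpleGraph.mem_neighborFinset] at hp hq hr
  exact ⟨p, q, r, hpq, hpr, hqr, hp.2, hq.2, hr.2, hp.1, hq.1, hr.1⟩

lemma five_nbrs [Fintype V] (G : SimpleGraph V) [DecidableRel G.Adj] {u a b c d e : V}
    (hdeg : G.degree u = 4)
    (ha : G.Adj u a) (hb : G.Adj u b) (hc : G.Adj u c) (hd : G.Adj u d) (he : G.Adj u e)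
    (hab : a ≠ b) (hac : a ≠ c) (had : a ≠ d) (hae : a ≠ e) (hbc : b ≠ c) (hbd : b ≠ d)
    (hbe : b ≠ e) (hcd : c ≠ d) (hce : c ≠ e) (hde : d ≠ e) : False := by
  classical
  have hsub : ({a, b, c, d, e} : Finset V) ⊆ G.neighborFinset u := by
    intro w hw
    simp only [Finset.mem_insert, Finset.mem_singleton] at hw
    rcases hw with rfl|rfl|rfl|rfl|rfl <;> rwa [SimpleGraph.mem_neighborFinset]
  have hcard : ({a, b, c, d, e} : Finset V).card = 5 := by
    rw [Finset.card_insert_of_notMem (by simp [hab, hac, had, hae]),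
      Finset.card_insert_of_notMem (by simp [hbc, hbd, hbe]),
      Finset.card_insert_of_notMem (by simp [hcd, hce]),
      Finset.card_insert_of_notMem (by simp [hde]), Finset.card_singleton]
  have := Finset.card_le_card hsub
  rw [← SimpleGraph.card_neighborFinset_eq_degree] at hdeg
  omega

lemma pick2 {α : Type*} {P : α → Prop} {a b : α}
    (hPab : P a → P b → False) : ∃ x, (x = a ∨ x = b) ∧ ¬ P x := by
  by_cases hPa : P a
  · exact ⟨b, Or.inr rfl, fun hPb => hPab hPa hPb⟩
  · exact ⟨a, Or.inl rfl, hPa⟩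

lemma pick3 {α : Type*} {P Q : α → Prop} {a b c : α}
    (hPab : P a → P b → False) (hPac : P a → P c → False) (hPbc : P b → P c → False)
    (hQab : Q a → Q b → False) (hQac : Q a → Q c → False) (hQbc : Q b → Q c → False) :
    ∃ x, (x = a ∨ x = b ∨ x = c) ∧ ¬ P x ∧ ¬ Q x := by
  by_cases hPa : P a <;> by_cases hQa : Q a <;> by_cases hPb : P b <;> by_cases hQb : Q b <;>
    by_cases hPc : P c <;> by_cases hQc : Q c <;>
    first
      | exact ⟨a, Or.inl rfl, hPa, hQa⟩
      | exact ⟨b, Or.inr (Or.inl rfl), hPb, hQb⟩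
      | exact ⟨c, Or.inr (Or.inr rfl), hPc, hQc⟩
      | exact (hPab hPa hPb).elim
      | exact (hPac hPa hPc).elim
      | exact (hPbc hPb hPc).elim
      | exact (hQab hQa hQb).elim
      | exact (hQac hQa hQc).elim
      | exact (hQbc hQb hQc).elim

lemma extract3 {α : Type*} {P Q R : α → Prop} {a b c : α}
    (hPab : P a → P b → False) (hPac : P a → P c → False) (hPbc : P b → P c → False)
    (hQab : Q a → Q b → False) (hQac : Q a → Q c → False) (hQbc : Q b → Q c → False)
    (hRab : R a → R b → False) (hRac : R a → R c → False) (hRbc : R b → R c → False)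
    (ha : P a ∨ Q a ∨ R a) (hb : P b ∨ Q b ∨ R b) (hc : P c ∨ Q c ∨ R c) :
    ∃ uq ur, (uq = a ∨ uq = b ∨ uq = c) ∧ (ur = a ∨ ur = b ∨ ur = c) ∧
      Q uq ∧ R ur ∧ ¬ P ur ∧ ¬ Q ur := by
  rcases ha with pa|qa|ra <;> rcases hb with pb|qb|rb <;> rcases hc with pc|qc|rc <;>
    first
      | exact (hPab pa pb).elim
      | exact (hPac pa pc).elim
      | exact (hPbc pb pc).elim
      | exact (hQab qa qb).elim
      | exact (hQac qa qc).elim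
      | exact (hQbc qb qc).elim
      | exact (hRab ra rb).elim
      | exact (hRac ra rc).elim
      | exact (hRbc rb rc).elim
      | exact ⟨b, c, Or.inr (Or.inl rfl), Or.inr (Or.inr rfl), qb, rc,
          fun h => hPac pa h, fun h => hQbc qb h⟩
      | exact ⟨c, b, Or.inr (Or.inr rfl), Or.inr (Or.inl rfl), qc, rb,
          fun h => hPab pa h, fun h => hQbc h qc⟩
      | exact ⟨a, c, Or.inl rfl, Or.inr (Or.inr rfl), qa, rc,
          fun h => hPbc pb h, fun h => hQac qa h⟩
      | exact ⟨c, a, Or.inr (Or.inr rfl), Or.inl rfl, qc, ra,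
          fun h => hPab h pb, fun h => hQac h qc⟩
      | exact ⟨a, b, Or.inl rfl, Or.inr (Or.inl rfl), qa, rb,
          fun h => hPbc h pc, fun h => hQab qa h⟩
      | exact ⟨b, a, Or.inr (Or.inl rfl), Or.inl rfl, qb, ra,
          fun h => hPac h pc, fun h => hQab h qb⟩


lemma no3 (h6 : 6 ≤ G.egirth) {a b c : V} (hab : G.Adj a b) (hbc : G.Adj b c)
    (hca : G.Adj c a) : False := by
  have hw : (Walk.cons hab (.cons hbc (.cons hca .nil))).IsCycle := by
    simp [Walk.isCycle_def, Walk.isTrail_def, Sym2.eq_iff, hab.ne, hbc.ne, hca.ne,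
      hab.ne', hbc.ne', hca.ne']
  have h := le_egirth.mp h6 a _ hw
  rw [show (Walk.cons hab (.cons hbc (.cons hca .nil))).length = 3 by simp] at h
  exact absurd h (by norm_num)

lemma no4 (h6 : 6 ≤ G.egirth) {a b c d : V} (hab : G.Adj a b) (hbc : G.Adj b c)
    (hcd : G.Adj c d) (hda : G.Adj d a) (hac : a ≠ c) (hbd : b ≠ d) : False := by
  have hw : (Walk.cons hab (.cons hbc (.cons hcd (.cons hda .nil)))).IsCycle := by
    simp [Walk.isCycle_def, Walk.isTrail_def, Sym2.eq_iff, hab.ne, hbc.ne, hcd.ne, hda.ne,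
      hab.ne', hbc.ne', hcd.ne', hda.ne', hac, hbd, hac.symm, hbd.symm]
  have h := le_egirth.mp h6 a _ hw
  rw [show (Walk.cons hab (.cons hbc (.cons hcd (.cons hda .nil)))).length = 4 by simp] at h
  exact absurd h (by norm_num)

lemma no5 (h6 : 6 ≤ G.egirth) {a b c d e : V} (hab : G.Adj a b) (hbc : G.Adj b c)
    (hcd : G.Adj c d) (hde : G.Adj d e) (hea : G.Adj e a)
    (hac : a ≠ c) (had : a ≠ d) (hbd : b ≠ d) (hbe : b ≠ e) (hce : c ≠ e) : False := by
  have hw : (Walk.cons hab (.cons hbc (.cons hcd (.cons hde (.cons hea .nil))))).IsCycle := by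
    simp [Walk.isCycle_def, Walk.isTrail_def, Sym2.eq_iff, hab.ne, hbc.ne, hcd.ne, hde.ne,
      hea.ne, hab.ne', hbc.ne', hcd.ne', hde.ne', hea.ne',
      hac, had, hbd, hbe, hce, hac.symm, had.symm, hbd.symm, hbe.symm, hce.symm]
  have h := le_egirth.mp h6 a _ hw
  rw [show (Walk.cons hab (.cons hbc (.cons hcd (.cons hde (.cons hea .nil))))).length = 5
    by simp] at h
  exact absurd h (by norm_num)


lemma sixEgirth (hg : G.girth = 6) : G.egirth = 6 := by
  have hne : G.egirth ≠ ⊤ := by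
    intro h
    unfold SimpleGraph.girth at hg
    rw [h] at hg
    simp at hg
  have h2 := ENat.coe_toNat hne
  unfold SimpleGraph.girth at hg
  rw [← h2, hg]
  rfl

lemma exists_sixCycle (hg : G.girth = 6) :
    ∃ a b c d e f : V, G.Adj a b ∧ G.Adj b c ∧ G.Adj c d ∧ G.Adj d e ∧ G.Adj e f ∧ G.Adj f a ∧
      a ≠ b ∧ a ≠ c ∧ a ≠ d ∧ a ≠ e ∧ a ≠ f ∧ b ≠ c ∧ b ≠ d ∧ b ≠ e ∧ b ≠ f ∧
      c ≠ d ∧ c ≠ e ∧ c ≠ f ∧ d ≠ e ∧ d ≠ f ∧ e ≠ f := by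
  have hnac : ¬ G.IsAcyclic := by
    intro h
    rw [h.girth_eq_zero] at hg
    omega
  obtain ⟨a, w, hcyc, hlen⟩ := SimpleGraph.exists_girth_eq_length.mpr hnac
  rw [hg] at hlen
  obtain ⟨b, hab, w, rfl⟩ : ∃ (b : V) (h : G.Adj a b) (w' : G.Walk b a), w = .cons h w' := by
    cases w with
    | nil => simp at hlen
    | cons h w' => exact ⟨_, h, w', rfl⟩
  obtain ⟨c, hbc, w, rfl⟩ : ∃ (c : V) (h : G.Adj b c) (w' : G.Walk c a), w = .cons h w' := by
    cases w with
    | nil => simp at hlen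
    | cons h w' => exact ⟨_, h, w', rfl⟩
  obtain ⟨d, hcd, w, rfl⟩ : ∃ (d : V) (h : G.Adj c d) (w' : G.Walk d a), w = .cons h w' := by
    cases w with
    | nil => simp at hlen
    | cons h w' => exact ⟨_, h, w', rfl⟩
  obtain ⟨e, hde, w, rfl⟩ : ∃ (e : V) (h : G.Adj d e) (w' : G.Walk e a), w = .cons h w' := by
    cases w with
    | nil => simp at hlen
    | cons h w' => exact ⟨_, h, w', rfl⟩
  obtain ⟨f, hef, w, rfl⟩ : ∃ (f : V) (h : G.Adj e f) (w' : G.Walk f a), w = .cons h w' := by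
    cases w with
    | nil => simp at hlen
    | cons h w' => exact ⟨_, h, w', rfl⟩
  obtain ⟨hfa, rfl⟩ : ∃ (h : G.Adj f a), w = .cons h .nil := by
    cases w with
    | nil => simp at hlen
    | cons h w' =>
      cases w' with
      | nil => exact ⟨h, rfl⟩
      | cons h' w'' => simp [Walk.length_cons] at hlen
  have hnd := hcyc.2
  simp only [Walk.support_cons, Walk.support_nil, List.tail_cons, List.nodup_cons,
    List.mem_cons, List.mem_singleton, List.nodup_nil, List.not_mem_nil] at hnd
  refine ⟨a, b, c, d, e, f, hab, hbc, hcd, hde, hef, hfa, hab.ne, ?_, ?_, ?_, hfa.ne',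
    hbc.ne, ?_, ?_, ?_, hcd.ne, ?_, ?_, hde.ne, ?_, hef.ne⟩ <;> tauto


lemma master [Fintype V] (G : SimpleGraph V) [DecidableRel G.Adj]
    (hreg : G.IsRegularOfDegree 4) (c₀ : V → ℕ) (v₀ : V)
    (h₀ : c₀ v₀ = 5) (hb : ∀ u, c₀ u ≤ 5)
    (hprop : ∀ u w, G.Adj u w → c₀ u ≠ 0 → c₀ w ≠ 0 → c₀ u ≠ c₀ w)
    (hsup : ∀ u, c₀ u ≠ 0 → ∀ t, 1 ≤ t → t < c₀ u → ∃ w, G.Adj u w ∧ c₀ w = t) :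
    GrundyColorable G 5 := by
  classical
  set P : (V → ℕ) → Prop := fun c =>
    (∀ u w, G.Adj u w → c u ≠ c w) ∧ (∀ u, 1 ≤ c u) ∧ (∀ u, c₀ u ≠ 0 → c u = c₀ u) with hP
  -- existence of some coloring satisfying P
  obtain ⟨E⟩ : Nonempty (V ≃ Fin (Fintype.card V)) := ⟨Fintype.equivFin V⟩
  have hPinit : P (fun u => if c₀ u = 0 then 6 + (E u : ℕ) else c₀ u) := by
    refine ⟨?_, ?_, ?_⟩
    · intro u w huw
      by_cases hu : c₀ u = 0 <;> by_cases hw : c₀ w = 0 <;> simp only [hu, hw, if_pos, if_neg,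
        if_true, if_false]
      · have : (E u : ℕ) ≠ (E w : ℕ) := by
          simp only [ne_eq, Fin.val_eq_val, EmbeddingLike.apply_eq_iff_eq]
          exact huw.ne
        omega
      · have := hb w; omega
      · have := hb u; omega
      · exact hprop u w huw hu hw
    · intro u
      by_cases hu : c₀ u = 0
      · simp only [if_pos hu]; omega
      · simp only [if_neg hu]; omega
    · intro u hu; simp [hu]
  -- minimize the sum
  set S : Set ℕ := {n | ∃ c, P c ∧ ∑ u, c u = n} with hS
  have hSne : S.Nonempty := ⟨_, _, hPinit, rfl⟩
  obtain ⟨c, hPc, hsum⟩ := Nat.sInf_mem hSne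
  have hmin : ∀ c' , P c' → ∑ u, c u ≤ ∑ u, c' u := by
    intro c' hc'
    rw [hsum]
    exact Nat.sInf_le ⟨c', hc', rfl⟩
  obtain ⟨hcprop, hc1, hcagree⟩ := hPc
  -- swap lemma
  have swap : ∀ u t, c₀ u = 0 → 1 ≤ t → (∀ w, G.Adj u w → c w ≠ t) → ¬ t < c u := by
    intro u t hu ht hnbr hlt
    have hP' : P (Function.update c u t) := by
      refine ⟨?_, ?_, ?_⟩
      · intro a b hab
        rcases eq_or_ne a u with rfl | ha
        · rw [Function.update_self, Function.update_of_ne hab.ne']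
          exact fun h => hnbr b hab h.symm
        · rw [Function.update_of_ne ha]
          rcases eq_or_ne b u with rfl | hbu
          · rw [Function.update_self]
            exact fun h => hnbr a hab.symm h
          · rw [Function.update_of_ne hbu]; exact hcprop a b hab
      · intro a
        rcases eq_or_ne a u with rfl | ha
        · rw [Function.update_self]; exact ht
        · rw [Function.update_of_ne ha]; exact hc1 a
      · intro a ha
        rcases eq_or_ne a u with rfl | hau
        · exact absurd hu ha
        · rw [Function.update_of_ne hau]; exact hcagree a ha
    have hlt' : ∑ x, Function.update c u t x < ∑ x, c x := by
      rw [Finset.sum_update_of_mem (Finset.mem_univ u), Finset.sdiff_singleton_eq_erase]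
      have := Finset.add_sum_erase Finset.univ c (Finset.mem_univ u)
      omega
    exact absurd (hmin _ hP') (by omega)
  -- bound for unassigned vertices via pigeonhole
  have hbound : ∀ u, c u ≤ 5 := by
    intro u
    by_cases hu : c₀ u = 0
    · by_contra h
      push_neg at h
      have hdeg : (G.neighborFinset u).card = 4 := hreg u
      have : ¬ (Finset.Icc 1 5 ⊆ (G.neighborFinset u).image c) := by
        intro hsub
        have h5 : (Finset.Icc 1 5).card = 5 := by simp
        have := Finset.card_le_card hsub
        have := Finset.card_image_le (f := c) (s := G.neighborFinset u)
        omega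
      obtain ⟨t, htIcc, htim⟩ := Finset.not_subset.mp this
      simp only [Finset.mem_Icc] at htIcc
      have hnbr : ∀ w, G.Adj u w → c w ≠ t := by
        intro w hw hwt
        exact htim (Finset.mem_image.mpr ⟨w, by simpa [SimpleGraph.mem_neighborFinset] using hw,
          hwt⟩)
      exact swap u t hu (by omega) hnbr (by omega)
    · rw [hcagree u hu]; exact hb u
  -- grundy property
  have hgrundy : ∀ v j, 1 ≤ j → j < c v → ∃ u, G.Adj v u ∧ c u = j := by
    intro v j hj hlt
    by_cases hv : c₀ v = 0
    · by_contra h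
      push_neg at h
      exact swap v j hv hj (fun w hw => h w hw) hlt
    · rw [hcagree v hv] at hlt
      obtain ⟨w, hw, hwj⟩ := hsup v hv j hj hlt
      exact ⟨w, hw, by rw [hcagree w (by omega)]; exact hwj⟩
  have hv₀ : c v₀ = 5 := by rw [hcagree v₀ (by omega)]; exact h₀
  exact ⟨c, ⟨hc1, hcprop, hgrundy⟩, hbound, by
    intro j hj hj5
    rcases eq_or_lt_of_le hj5 with rfl | hlt
    · exact ⟨v₀, hv₀⟩
    · obtain ⟨u, _, hu⟩ := hgrundy v₀ j hj (by omega)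
      exact ⟨u, hu⟩⟩


lemma upper [Fintype V] (G : SimpleGraph V) [DecidableRel G.Adj]
    (hreg : G.IsRegularOfDegree 4) : ∀ k, GrundyColorable G k → k ≤ 5 := by
  classical
  intro k hk
  by_contra h
  push_neg at h
  obtain ⟨c, ⟨⟨h1, hprop, hgr⟩, hbk, hsurj⟩⟩ := hk
  obtain ⟨w, hw⟩ := hsurj k (by omega) le_rfl
  have hex : ∀ t ∈ Finset.Icc 1 5, ∃ u, G.Adj w u ∧ c u = t := by
    intro t ht
    simp only [Finset.mem_Icc] at ht
    exact hgr w t ht.1 (by omega)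
  choose f hf1 hf2 using hex
  have hcard := Finset.card_le_card_of_injOn (s := (Finset.Icc 1 5).attach)
    (t := G.neighborFinset w) (fun t => f t.1 t.2)
    (fun t _ => by simpa [SimpleGraph.mem_neighborFinset] using hf1 t.1 t.2)
    (fun a _ b _ hab => by
      have ha := hf2 a.1 a.2
      have hb := hf2 b.1 b.2
      simp only at hab
      rw [hab, hb] at ha
      exact Subtype.ext ha.symm)
  rw [Finset.card_attach, Nat.card_Icc] at hcard
  have hdw : (G.neighborFinset w).card = 4 := hreg w
  omega


set_option maxHeartbeats 4000000 in
lemma build [Fintype V] (G : SimpleGraph V) [DecidableRel G.Adj]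
    (hreg : G.IsRegularOfDegree 4)
    (V5 W4 W3a W3b W2a W2b W2c W2d W1a W1b W1c W1d W1e W1f W1g W1h : V)
    (E1 : G.Adj V5 W1a)
    (E2 : G.Adj V5 W2a)
    (E3 : G.Adj V5 W3a)
    (E4 : G.Adj V5 W4)
    (E5 : G.Adj W2a W1b)
    (E6 : G.Adj W3a W1c)
    (E7 : G.Adj W3a W2b)
    (E8 : G.Adj W2b W1d)
    (E9 : G.Adj W4 W1e)
    (E10 : G.Adj W4 W2c)
    (E11 : G.Adj W4 W3b)
    (E12 : G.Adj W2c W1f)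
    (E13 : G.Adj W3b W1g)
    (E14 : G.Adj W3b W2d)
    (E15 : G.Adj W2d W1h)
    (S_W1a_W1b : ¬ G.Adj W1a W1b)
    (S_W1a_W1c : ¬ G.Adj W1a W1c)
    (S_W1a_W1d : ¬ G.Adj W1a W1d)
    (S_W1a_W1e : ¬ G.Adj W1a W1e)
    (S_W1a_W1f : ¬ G.Adj W1a W1f)
    (S_W1a_W1g : ¬ G.Adj W1a W1g)
    (S_W1a_W1h : ¬ G.Adj W1a W1h)
    (S_W1b_W1c : ¬ G.Adj W1b W1c)
    (S_W1b_W1d : ¬ G.Adj W1b W1d)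
    (S_W1b_W1e : ¬ G.Adj W1b W1e)
    (S_W1b_W1f : ¬ G.Adj W1b W1f)
    (S_W1b_W1g : ¬ G.Adj W1b W1g)
    (S_W1b_W1h : ¬ G.Adj W1b W1h)
    (S_W1c_W1d : ¬ G.Adj W1c W1d)
    (S_W1c_W1e : ¬ G.Adj W1c W1e)
    (S_W1c_W1f : ¬ G.Adj W1c W1f)
    (S_W1c_W1g : ¬ G.Adj W1c W1g)
    (S_W1c_W1h : ¬ G.Adj W1c W1h)
    (S_W1d_W1e : ¬ G.Adj W1d W1e)
    (S_W1d_W1f : ¬ G.Adj W1d W1f)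
    (S_W1d_W1g : ¬ G.Adj W1d W1g)
    (S_W1d_W1h : ¬ G.Adj W1d W1h)
    (S_W1e_W1f : ¬ G.Adj W1e W1f)
    (S_W1e_W1g : ¬ G.Adj W1e W1g)
    (S_W1e_W1h : ¬ G.Adj W1e W1h)
    (S_W1f_W1g : ¬ G.Adj W1f W1g)
    (S_W1f_W1h : ¬ G.Adj W1f W1h)
    (S_W1g_W1h : ¬ G.Adj W1g W1h)
    (S_W2a_W2b : ¬ G.Adj W2a W2b)
    (S_W2a_W2c : ¬ G.Adj W2a W2c)
    (S_W2a_W2d : ¬ G.Adj W2a W2d)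
    (S_W2b_W2c : ¬ G.Adj W2b W2c)
    (S_W2b_W2d : ¬ G.Adj W2b W2d)
    (S_W2c_W2d : ¬ G.Adj W2c W2d)
    (S_W3a_W3b : ¬ G.Adj W3a W3b)
    (N_V5_W3b : V5 ≠ W3b)
    (N_V5_W2b : V5 ≠ W2b)
    (N_V5_W2c : V5 ≠ W2c)
    (N_V5_W2d : V5 ≠ W2d)
    (N_V5_W1b : V5 ≠ W1b)
    (N_V5_W1c : V5 ≠ W1c)
    (N_V5_W1d : V5 ≠ W1d)
    (N_V5_W1e : V5 ≠ W1e)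
    (N_V5_W1f : V5 ≠ W1f)
    (N_V5_W1g : V5 ≠ W1g)
    (N_V5_W1h : V5 ≠ W1h)
    (N_W4_W3a : W4 ≠ W3a)
    (N_W4_W2a : W4 ≠ W2a)
    (N_W4_W2b : W4 ≠ W2b)
    (N_W4_W2d : W4 ≠ W2d)
    (N_W4_W1a : W4 ≠ W1a)
    (N_W4_W1b : W4 ≠ W1b)
    (N_W4_W1c : W4 ≠ W1c)
    (N_W4_W1d : W4 ≠ W1d)
    (N_W4_W1f : W4 ≠ W1f)
    (N_W4_W1g : W4 ≠ W1g)
    (N_W4_W1h : W4 ≠ W1h)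
    (N_W3a_W2a : W3a ≠ W2a)
    (N_W3a_W2c : W3a ≠ W2c)
    (N_W3a_W2d : W3a ≠ W2d)
    (N_W3a_W1a : W3a ≠ W1a)
    (N_W3a_W1b : W3a ≠ W1b)
    (N_W3a_W1d : W3a ≠ W1d)
    (N_W3a_W1e : W3a ≠ W1e)
    (N_W3a_W1f : W3a ≠ W1f)
    (N_W3a_W1g : W3a ≠ W1g)
    (N_W3a_W1h : W3a ≠ W1h)
    (N_W3b_W2a : W3b ≠ W2a)
    (N_W3b_W2b : W3b ≠ W2b)
    (N_W3b_W2c : W3b ≠ W2c)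
    (N_W3b_W1a : W3b ≠ W1a)
    (N_W3b_W1b : W3b ≠ W1b)
    (N_W3b_W1c : W3b ≠ W1c)
    (N_W3b_W1d : W3b ≠ W1d)
    (N_W3b_W1e : W3b ≠ W1e)
    (N_W3b_W1f : W3b ≠ W1f)
    (N_W3b_W1h : W3b ≠ W1h)
    (N_W2a_W1a : W2a ≠ W1a)
    (N_W2a_W1c : W2a ≠ W1c)
    (N_W2a_W1d : W2a ≠ W1d)
    (N_W2a_W1e : W2a ≠ W1e)
    (N_W2a_W1f : W2a ≠ W1f)
    (N_W2a_W1g : W2a ≠ W1g)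
    (N_W2a_W1h : W2a ≠ W1h)
    (N_W2b_W1a : W2b ≠ W1a)
    (N_W2b_W1b : W2b ≠ W1b)
    (N_W2b_W1c : W2b ≠ W1c)
    (N_W2b_W1e : W2b ≠ W1e)
    (N_W2b_W1f : W2b ≠ W1f)
    (N_W2b_W1g : W2b ≠ W1g)
    (N_W2b_W1h : W2b ≠ W1h)
    (N_W2c_W1a : W2c ≠ W1a)
    (N_W2c_W1b : W2c ≠ W1b)
    (N_W2c_W1c : W2c ≠ W1c)
    (N_W2c_W1d : W2c ≠ W1d)
    (N_W2c_W1e : W2c ≠ W1e)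
    (N_W2c_W1g : W2c ≠ W1g)
    (N_W2c_W1h : W2c ≠ W1h)
    (N_W2d_W1a : W2d ≠ W1a)
    (N_W2d_W1b : W2d ≠ W1b)
    (N_W2d_W1c : W2d ≠ W1c)
    (N_W2d_W1d : W2d ≠ W1d)
    (N_W2d_W1e : W2d ≠ W1e)
    (N_W2d_W1f : W2d ≠ W1f)
    (N_W2d_W1g : W2d ≠ W1g)
    : GrundyColorable G 5 := by
  classical
  set c₀ : V → ℕ := fun u =>
    if u = V5 then 5 else if u = W4 then 4
    else if u = W3a ∨ u = W3b then 3
    else if u = W2a ∨ u = W2b ∨ u = W2c ∨ u = W2d then 2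
    else if u = W1a ∨ u = W1b ∨ u = W1c ∨ u = W1d ∨ u = W1e ∨ u = W1f ∨ u = W1g ∨ u = W1h then 1
    else 0 with hc₀
  have val_V5 : c₀ V5 = 5 := by simp [hc₀]
  have val_W4 : c₀ W4 = 4 := by simp [hc₀, E4.ne']
  have val_W3a : c₀ W3a = 3 := by simp [hc₀, E3.ne', N_W4_W3a.symm]
  have val_W3b : c₀ W3b = 3 := by simp [hc₀, N_V5_W3b.symm, E11.ne']
  have val_W2a : c₀ W2a = 2 := by simp [hc₀, E2.ne', N_W4_W2a.symm, N_W3a_W2a.symm, N_W3b_W2a.symm]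
  have val_W2b : c₀ W2b = 2 := by simp [hc₀, N_V5_W2b.symm, N_W4_W2b.symm, E7.ne', N_W3b_W2b.symm]
  have val_W2c : c₀ W2c = 2 := by simp [hc₀, N_V5_W2c.symm, E10.ne', N_W3a_W2c.symm, N_W3b_W2c.symm]
  have val_W2d : c₀ W2d = 2 := by simp [hc₀, N_V5_W2d.symm, N_W4_W2d.symm, N_W3a_W2d.symm, E14.ne']
  have val_W1a : c₀ W1a = 1 := by simp [hc₀, E1.ne', N_W4_W1a.symm, N_W3a_W1a.symm, N_W3b_W1a.symm, N_W2a_W1a.symm, N_W2b_W1a.symm, N_W2c_W1a.symm, N_W2d_W1a.symm]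
  have val_W1b : c₀ W1b = 1 := by simp [hc₀, N_V5_W1b.symm, N_W4_W1b.symm, N_W3a_W1b.symm, N_W3b_W1b.symm, E5.ne', N_W2b_W1b.symm, N_W2c_W1b.symm, N_W2d_W1b.symm]
  have val_W1c : c₀ W1c = 1 := by simp [hc₀, N_V5_W1c.symm, N_W4_W1c.symm, E6.ne', N_W3b_W1c.symm, N_W2a_W1c.symm, N_W2b_W1c.symm, N_W2c_W1c.symm, N_W2d_W1c.symm]
  have val_W1d : c₀ W1d = 1 := by simp [hc₀, N_V5_W1d.symm, N_W4_W1d.symm, N_W3a_W1d.symm, N_W3b_W1d.symm, N_W2a_W1d.symm, E8.ne', N_W2c_W1d.symm, N_W2d_W1d.symm]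
  have val_W1e : c₀ W1e = 1 := by simp [hc₀, N_V5_W1e.symm, E9.ne', N_W3a_W1e.symm, N_W3b_W1e.symm, N_W2a_W1e.symm, N_W2b_W1e.symm, N_W2c_W1e.symm, N_W2d_W1e.symm]
  have val_W1f : c₀ W1f = 1 := by simp [hc₀, N_V5_W1f.symm, N_W4_W1f.symm, N_W3a_W1f.symm, N_W3b_W1f.symm, N_W2a_W1f.symm, N_W2b_W1f.symm, E12.ne', N_W2d_W1f.symm]
  have val_W1g : c₀ W1g = 1 := by simp [hc₀, N_V5_W1g.symm, N_W4_W1g.symm, N_W3a_W1g.symm, E13.ne', N_W2a_W1g.symm, N_W2b_W1g.symm, N_W2c_W1g.symm, N_W2d_W1g.symm]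
  have val_W1h : c₀ W1h = 1 := by simp [hc₀, N_V5_W1h.symm, N_W4_W1h.symm, N_W3a_W1h.symm, N_W3b_W1h.symm, N_W2a_W1h.symm, N_W2b_W1h.symm, N_W2c_W1h.symm, E15.ne']
  have mem1 : ∀ u, c₀ u = 1 → (u = W1a ∨ u = W1b ∨ u = W1c ∨ u = W1d ∨ u = W1e ∨ u = W1f ∨ u = W1g ∨ u = W1h) := by
    intro u hu; simp only [hc₀] at hu; split_ifs at hu <;> first | omega | tauto
  have mem2 : ∀ u, c₀ u = 2 → (u = W2a ∨ u = W2b ∨ u = W2c ∨ u = W2d) := by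
    intro u hu; simp only [hc₀] at hu; split_ifs at hu <;> first | omega | tauto
  have mem3 : ∀ u, c₀ u = 3 → (u = W3a ∨ u = W3b) := by
    intro u hu; simp only [hc₀] at hu; split_ifs at hu <;> first | omega | tauto
  have mem4 : ∀ u, c₀ u = 4 → u = W4 := by
    intro u hu; simp only [hc₀] at hu; split_ifs at hu <;> first | omega | tauto
  have mem5 : ∀ u, c₀ u = 5 → u = V5 := by
    intro u hu; simp only [hc₀] at hu; split_ifs at hu <;> first | omega | tauto
  have hb : ∀ u, c₀ u ≤ 5 := by
    intro u; simp only [hc₀]; split_ifs <;> omega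
  have hrange : ∀ u, c₀ u ≤ 5 := hb
  have hprop : ∀ u w, G.Adj u w → c₀ u ≠ 0 → c₀ w ≠ 0 → c₀ u ≠ c₀ w := by
    intro u w hadj hu hw heq
    have h15 : c₀ u = 1 ∨ c₀ u = 2 ∨ c₀ u = 3 ∨ c₀ u = 4 ∨ c₀ u = 5 := by
      have := hb u; omega
    rcases h15 with hval|hval|hval|hval|hval
    · rcases mem1 u hval with rfl|rfl|rfl|rfl|rfl|rfl|rfl|rfl <;>
        rcases mem1 w (by omega) with rfl|rfl|rfl|rfl|rfl|rfl|rfl|rfl <;>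
        first
          | exact G.loopless.irrefl _ hadj
          | exact S_W1a_W1b hadj
          | exact S_W1a_W1b hadj.symm
          | exact S_W1a_W1c hadj
          | exact S_W1a_W1c hadj.symm
          | exact S_W1a_W1d hadj
          | exact S_W1a_W1d hadj.symm
          | exact S_W1a_W1e hadj
          | exact S_W1a_W1e hadj.symm
          | exact S_W1a_W1f hadj
          | exact S_W1a_W1f hadj.symm
          | exact S_W1a_W1g hadj
          | exact S_W1a_W1g hadj.symm
          | exact S_W1a_W1h hadj
          | exact S_W1a_W1h hadj.symm
          | exact S_W1b_W1c hadj
          | exact S_W1b_W1c hadj.symm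
          | exact S_W1b_W1d hadj
          | exact S_W1b_W1d hadj.symm
          | exact S_W1b_W1e hadj
          | exact S_W1b_W1e hadj.symm
          | exact S_W1b_W1f hadj
          | exact S_W1b_W1f hadj.symm
          | exact S_W1b_W1g hadj
          | exact S_W1b_W1g hadj.symm
          | exact S_W1b_W1h hadj
          | exact S_W1b_W1h hadj.symm
          | exact S_W1c_W1d hadj
          | exact S_W1c_W1d hadj.symm
          | exact S_W1c_W1e hadj
          | exact S_W1c_W1e hadj.symm
          | exact S_W1c_W1f hadj
          | exact S_W1c_W1f hadj.symm
          | exact S_W1c_W1g hadj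
          | exact S_W1c_W1g hadj.symm
          | exact S_W1c_W1h hadj
          | exact S_W1c_W1h hadj.symm
          | exact S_W1d_W1e hadj
          | exact S_W1d_W1e hadj.symm
          | exact S_W1d_W1f hadj
          | exact S_W1d_W1f hadj.symm
          | exact S_W1d_W1g hadj
          | exact S_W1d_W1g hadj.symm
          | exact S_W1d_W1h hadj
          | exact S_W1d_W1h hadj.symm
          | exact S_W1e_W1f hadj
          | exact S_W1e_W1f hadj.symm
          | exact S_W1e_W1g hadj
          | exact S_W1e_W1g hadj.symm
          | exact S_W1e_W1h hadj
          | exact S_W1e_W1h hadj.symm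
          | exact S_W1f_W1g hadj
          | exact S_W1f_W1g hadj.symm
          | exact S_W1f_W1h hadj
          | exact S_W1f_W1h hadj.symm
          | exact S_W1g_W1h hadj
          | exact S_W1g_W1h hadj.symm
          | exact S_W2a_W2b hadj
          | exact S_W2a_W2b hadj.symm
          | exact S_W2a_W2c hadj
          | exact S_W2a_W2c hadj.symm
          | exact S_W2a_W2d hadj
          | exact S_W2a_W2d hadj.symm
          | exact S_W2b_W2c hadj
          | exact S_W2b_W2c hadj.symm
          | exact S_W2b_W2d hadj
          | exact S_W2b_W2d hadj.symm
          | exact S_W2c_W2d hadj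
          | exact S_W2c_W2d hadj.symm
          | exact S_W3a_W3b hadj
          | exact S_W3a_W3b hadj.symm
    · rcases mem2 u hval with rfl|rfl|rfl|rfl <;>
        rcases mem2 w (by omega) with rfl|rfl|rfl|rfl <;>
        first
          | exact G.loopless.irrefl _ hadj
          | exact S_W1a_W1b hadj
          | exact S_W1a_W1b hadj.symm
          | exact S_W1a_W1c hadj
          | exact S_W1a_W1c hadj.symm
          | exact S_W1a_W1d hadj
          | exact S_W1a_W1d hadj.symm
          | exact S_W1a_W1e hadj
          | exact S_W1a_W1e hadj.symm
          | exact S_W1a_W1f hadj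
          | exact S_W1a_W1f hadj.symm
          | exact S_W1a_W1g hadj
          | exact S_W1a_W1g hadj.symm
          | exact S_W1a_W1h hadj
          | exact S_W1a_W1h hadj.symm
          | exact S_W1b_W1c hadj
          | exact S_W1b_W1c hadj.symm
          | exact S_W1b_W1d hadj
          | exact S_W1b_W1d hadj.symm
          | exact S_W1b_W1e hadj
          | exact S_W1b_W1e hadj.symm
          | exact S_W1b_W1f hadj
          | exact S_W1b_W1f hadj.symm
          | exact S_W1b_W1g hadj
          | exact S_W1b_W1g hadj.symm
          | exact S_W1b_W1h hadj
          | exact S_W1b_W1h hadj.symm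
          | exact S_W1c_W1d hadj
          | exact S_W1c_W1d hadj.symm
          | exact S_W1c_W1e hadj
          | exact S_W1c_W1e hadj.symm
          | exact S_W1c_W1f hadj
          | exact S_W1c_W1f hadj.symm
          | exact S_W1c_W1g hadj
          | exact S_W1c_W1g hadj.symm
          | exact S_W1c_W1h hadj
          | exact S_W1c_W1h hadj.symm
          | exact S_W1d_W1e hadj
          | exact S_W1d_W1e hadj.symm
          | exact S_W1d_W1f hadj
          | exact S_W1d_W1f hadj.symm
          | exact S_W1d_W1g hadj
          | exact S_W1d_W1g hadj.symm
          | exact S_W1d_W1h hadj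
          | exact S_W1d_W1h hadj.symm
          | exact S_W1e_W1f hadj
          | exact S_W1e_W1f hadj.symm
          | exact S_W1e_W1g hadj
          | exact S_W1e_W1g hadj.symm
          | exact S_W1e_W1h hadj
          | exact S_W1e_W1h hadj.symm
          | exact S_W1f_W1g hadj
          | exact S_W1f_W1g hadj.symm
          | exact S_W1f_W1h hadj
          | exact S_W1f_W1h hadj.symm
          | exact S_W1g_W1h hadj
          | exact S_W1g_W1h hadj.symm
          | exact S_W2a_W2b hadj
          | exact S_W2a_W2b hadj.symm
          | exact S_W2a_W2c hadj
          | exact S_W2a_W2c hadj.symm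
          | exact S_W2a_W2d hadj
          | exact S_W2a_W2d hadj.symm
          | exact S_W2b_W2c hadj
          | exact S_W2b_W2c hadj.symm
          | exact S_W2b_W2d hadj
          | exact S_W2b_W2d hadj.symm
          | exact S_W2c_W2d hadj
          | exact S_W2c_W2d hadj.symm
          | exact S_W3a_W3b hadj
          | exact S_W3a_W3b hadj.symm
    · rcases mem3 u hval with rfl|rfl <;>
        rcases mem3 w (by omega) with rfl|rfl <;>
        first
          | exact G.loopless.irrefl _ hadj
          | exact S_W1a_W1b hadj
          | exact S_W1a_W1b hadj.symm
          | exact S_W1a_W1c hadj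
          | exact S_W1a_W1c hadj.symm
          | exact S_W1a_W1d hadj
          | exact S_W1a_W1d hadj.symm
          | exact S_W1a_W1e hadj
          | exact S_W1a_W1e hadj.symm
          | exact S_W1a_W1f hadj
          | exact S_W1a_W1f hadj.symm
          | exact S_W1a_W1g hadj
          | exact S_W1a_W1g hadj.symm
          | exact S_W1a_W1h hadj
          | exact S_W1a_W1h hadj.symm
          | exact S_W1b_W1c hadj
          | exact S_W1b_W1c hadj.symm
          | exact S_W1b_W1d hadj
          | exact S_W1b_W1d hadj.symm
          | exact S_W1b_W1e hadj
          | exact S_W1b_W1e hadj.symm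
          | exact S_W1b_W1f hadj
          | exact S_W1b_W1f hadj.symm
          | exact S_W1b_W1g hadj
          | exact S_W1b_W1g hadj.symm
          | exact S_W1b_W1h hadj
          | exact S_W1b_W1h hadj.symm
          | exact S_W1c_W1d hadj
          | exact S_W1c_W1d hadj.symm
          | exact S_W1c_W1e hadj
          | exact S_W1c_W1e hadj.symm
          | exact S_W1c_W1f hadj
          | exact S_W1c_W1f hadj.symm
          | exact S_W1c_W1g hadj
          | exact S_W1c_W1g hadj.symm
          | exact S_W1c_W1h hadj
          | exact S_W1c_W1h hadj.symm
          | exact S_W1d_W1e hadj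
          | exact S_W1d_W1e hadj.symm
          | exact S_W1d_W1f hadj
          | exact S_W1d_W1f hadj.symm
          | exact S_W1d_W1g hadj
          | exact S_W1d_W1g hadj.symm
          | exact S_W1d_W1h hadj
          | exact S_W1d_W1h hadj.symm
          | exact S_W1e_W1f hadj
          | exact S_W1e_W1f hadj.symm
          | exact S_W1e_W1g hadj
          | exact S_W1e_W1g hadj.symm
          | exact S_W1e_W1h hadj
          | exact S_W1e_W1h hadj.symm
          | exact S_W1f_W1g hadj
          | exact S_W1f_W1g hadj.symm
          | exact S_W1f_W1h hadj
          | exact S_W1f_W1h hadj.symm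
          | exact S_W1g_W1h hadj
          | exact S_W1g_W1h hadj.symm
          | exact S_W2a_W2b hadj
          | exact S_W2a_W2b hadj.symm
          | exact S_W2a_W2c hadj
          | exact S_W2a_W2c hadj.symm
          | exact S_W2a_W2d hadj
          | exact S_W2a_W2d hadj.symm
          | exact S_W2b_W2c hadj
          | exact S_W2b_W2c hadj.symm
          | exact S_W2b_W2d hadj
          | exact S_W2b_W2d hadj.symm
          | exact S_W2c_W2d hadj
          | exact S_W2c_W2d hadj.symm
          | exact S_W3a_W3b hadj
          | exact S_W3a_W3b hadj.symm
    · have := mem4 u hval; have := mem4 w (by omega); subst_vars; exact G.loopless.irrefl _ hadj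
    · have := mem5 u hval; have := mem5 w (by omega); subst_vars; exact G.loopless.irrefl _ hadj
  have hsup : ∀ u, c₀ u ≠ 0 → ∀ t, 1 ≤ t → t < c₀ u → ∃ w, G.Adj u w ∧ c₀ w = t := by
    intro u hu t ht htlt
    have h15 : c₀ u = 1 ∨ c₀ u = 2 ∨ c₀ u = 3 ∨ c₀ u = 4 ∨ c₀ u = 5 := by
      have := hb u; omega
    rcases h15 with hval|hval|hval|hval|hval
    · omega
    · rcases mem2 u hval with rfl|rfl|rfl|rfl
      · exact ⟨W1b, E5, by omega⟩
      · exact ⟨W1d, E8, by omega⟩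
      · exact ⟨W1f, E12, by omega⟩
      · exact ⟨W1h, E15, by omega⟩
    · rcases mem3 u hval with rfl|rfl
      · rw [hval] at htlt
        interval_cases t
        · exact ⟨W1c, E6, by omega⟩
        · exact ⟨W2b, E7, by omega⟩
      · rw [hval] at htlt
        interval_cases t
        · exact ⟨W1g, E13, by omega⟩
        · exact ⟨W2d, E14, by omega⟩
    · have := mem4 u hval; subst this
      rw [hval] at htlt
      interval_cases t
      · exact ⟨W1e, E9, by omega⟩
      · exact ⟨W2c, E10, by omega⟩
      · exact ⟨W3b, E11, by omega⟩
    · have := mem5 u hval; subst this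
      rw [hval] at htlt
      interval_cases t
      · exact ⟨W1a, E1, by omega⟩
      · exact ⟨W2a, E2, by omega⟩
      · exact ⟨W3a, E3, by omega⟩
      · exact ⟨W4, E4, by omega⟩
  exact master G hreg c₀ V5 val_V5 hb hprop hsup

set_option maxHeartbeats 4000000 in
lemma lower [Fintype V] (G : SimpleGraph V) [DecidableRel G.Adj]
    (hreg : G.IsRegularOfDegree 4) (hg : G.girth = 6) : GrundyColorable G 5 := by
  classical
  have h6 : (6 : ℕ∞) ≤ G.egirth := (sixEgirth hg).ge
  obtain ⟨x1, x2, x3, x4, x5, x6, a12, a23, a34, a45, a56, a61,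
    n12, n13, n14, n15, n16, n23, n24, n25, n26, n34, n35, n36, n45, n46, n56⟩ :=
    exists_sixCycle hg
  have ch13 : ¬ G.Adj x1 x3 := fun h => no3 h6 a12 a23 h.symm
  have ch24 : ¬ G.Adj x2 x4 := fun h => no3 h6 a23 a34 h.symm
  have ch35 : ¬ G.Adj x3 x5 := fun h => no3 h6 a34 a45 h.symm
  have ch46 : ¬ G.Adj x4 x6 := fun h => no3 h6 a45 a56 h.symm
  have ch15 : ¬ G.Adj x1 x5 := fun h => no3 h6 h a56 a61
  have ch26 : ¬ G.Adj x2 x6 := fun h => no3 h6 a61 a12 h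
  have ch14 : ¬ G.Adj x1 x4 := fun h => no4 h6 a12 a23 a34 h.symm n13 n24
  have ch25 : ¬ G.Adj x2 x5 := fun h => no4 h6 a23 a34 a45 h.symm n24 n35
  have ch36 : ¬ G.Adj x3 x6 := fun h => no4 h6 a34 a45 a56 h.symm n35 n46
  have hdeg : ∀ u : V, G.degree u = 4 := hreg
  -- p and q : the other two neighbours of x1
  obtain ⟨p, q, hpq, hp1, hq1, hp_2, hp_6, hq_2, hq_6⟩ :=
    two_of G (hdeg x1) a12 a61.symm n26
  have np1 : p ≠ x1 := hp1.ne'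
  have nq1 : q ≠ x1 := hq1.ne'
  have np3 : p ≠ x3 := by intro h; subst h; exact ch13 hp1
  have nq3 : q ≠ x3 := by intro h; subst h; exact ch13 hq1
  have np4 : p ≠ x4 := by intro h; subst h; exact ch14 hp1
  have nq4 : q ≠ x4 := by intro h; subst h; exact ch14 hq1
  have np5 : p ≠ x5 := by intro h; subst h; exact ch15 hp1
  have nq5 : q ≠ x5 := by intro h; subst h; exact ch15 hq1
  -- d : a neighbour of x6 other than x1, x5
  obtain ⟨d, d', hdd', hd6, hd6', hd_1, hd_5, hd'_1, hd'_5⟩ :=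
    two_of G (hdeg x6) a61 a56.symm n15
  clear hdd' hd6' hd'_1 hd'_5
  have nd6 : d ≠ x6 := hd6.ne'
  have nd2 : d ≠ x2 := by intro h; subst h; exact ch26 hd6.symm
  have nd3 : d ≠ x3 := by intro h; subst h; exact ch36 hd6.symm
  have nd4 : d ≠ x4 := by intro h; subst h; exact ch46 hd6.symm
  have ndp : d ≠ p := by intro h; subst h; exact no3 h6 a61 hp1 hd6.symm
  have ndq : d ≠ q := by intro h; subst h; exact no3 h6 a61 hq1 hd6.symm
  -- e : any neighbour of d other than x6
  obtain ⟨e, e', e'', hee', hee'', he'e'', hde, hde', hde'', he6, he'6, he''6⟩ :=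
    three_of G (hdeg d) hd6.symm
  clear hee' hee'' he'e'' hde' hde'' he'6 he''6
  have ned : e ≠ d := hde.ne'
  have ne1 : e ≠ x1 := by intro h; subst h; exact no3 h6 hd6 hde a61.symm
  have ne2 : e ≠ x2 := by intro h; subst h; exact no4 h6 hd6 hde a12.symm a61.symm n26.symm hd_1
  have ne3 : e ≠ x3 := by
    intro h; subst h; exact no5 h6 hd6 hde a23.symm a12.symm a61.symm n36.symm n26.symm nd2 hd_1 n13.symm
  have ne4 : e ≠ x4 := by intro h; subst h; exact no4 h6 hd6 hde a45 a56 n46.symm hd_5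
  have ne5 : e ≠ x5 := by intro h; subst h; exact no3 h6 a56 hd6 hde
  have nep : e ≠ p := by intro h; subst h; exact no4 h6 hd6 hde hp1.symm a61.symm hp_6.symm hd_1
  have neq : e ≠ q := by intro h; subst h; exact no4 h6 hd6 hde hq1.symm a61.symm hq_6.symm hd_1
  -- y and z : the other two neighbours of x2
  obtain ⟨y, z, hyz, hy2, hz2, hy_1, hy_3, hz_1, hz_3⟩ :=
    two_of G (hdeg x2) a12.symm a23 n13
  have ny2 : y ≠ x2 := hy2.ne'
  have nz2 : z ≠ x2 := hz2.ne'
  have ny4 : y ≠ x4 := by intro h; subst h; exact ch24 hy2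
  have nz4 : z ≠ x4 := by intro h; subst h; exact ch24 hz2
  have ny5 : y ≠ x5 := by intro h; subst h; exact ch25 hy2
  have nz5 : z ≠ x5 := by intro h; subst h; exact ch25 hz2
  have ny6 : y ≠ x6 := by intro h; subst h; exact ch26 hy2
  have nz6 : z ≠ x6 := by intro h; subst h; exact ch26 hz2
  have nyp : y ≠ p := by intro h; subst h; exact no3 h6 a12 hy2 hp1.symm
  have nyq : y ≠ q := by intro h; subst h; exact no3 h6 a12 hy2 hq1.symm
  have nzp : z ≠ p := by intro h; subst h; exact no3 h6 a12 hz2 hp1.symm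
  have nzq : z ≠ q := by intro h; subst h; exact no3 h6 a12 hz2 hq1.symm
  have nyd : y ≠ d := by intro h; subst h; exact no4 h6 a12.symm a61.symm hd6 hy2.symm n26 hd_1.symm
  have nzd : z ≠ d := by intro h; subst h; exact no4 h6 a12.symm a61.symm hd6 hz2.symm n26 hd_1.symm
  have nye : y ≠ e := by
    intro h; subst h
    exact no5 h6 a12.symm a61.symm hd6 hde hy2.symm n26 nd2.symm hd_1.symm ne1.symm he6.symm
  have nze : z ≠ e := by
    intro h; subst h
    exact no5 h6 a12.symm a61.symm hd6 hde hz2.symm n26 nd2.symm hd_1.symm ne1.symm he6.symm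
  -- static non-adjacencies: colour class 2
  have spd : ¬ G.Adj p d := fun h => no4 h6 h hd6.symm a61 hp1 hp_6 hd_1
  have sqd : ¬ G.Adj q d := fun h => no4 h6 h hd6.symm a61 hq1 hq_6 hd_1
  have spy : ¬ G.Adj p y := fun h => no4 h6 h hy2.symm a12.symm hp1 hp_2 hy_1
  have spz : ¬ G.Adj p z := fun h => no4 h6 h hz2.symm a12.symm hp1 hp_2 hz_1
  have sqy : ¬ G.Adj q y := fun h => no4 h6 h hy2.symm a12.symm hq1 hq_2 hy_1
  have sqz : ¬ G.Adj q z := fun h => no4 h6 h hz2.symm a12.symm hq1 hq_2 hz_1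
  have spx4 : ¬ G.Adj p x4 := fun h => no5 h6 h a45 a56 a61 hp1 np5 hp_6 n46 n14.symm n15.symm
  have sqx4 : ¬ G.Adj q x4 := fun h => no5 h6 h a45 a56 a61 hq1 nq5 hq_6 n46 n14.symm n15.symm
  have sdx4 : ¬ G.Adj d x4 := fun h => no4 h6 h a45 a56 hd6 hd_5 n46
  have sdy : ¬ G.Adj d y :=
    fun h => no5 h6 h hy2.symm a12.symm a61.symm hd6 nd2 hd_1 hy_1 ny6 n26
  have sdz : ¬ G.Adj d z :=
    fun h => no5 h6 h hz2.symm a12.symm a61.symm hd6 nd2 hd_1 hz_1 nz6 n26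
  have syx4 : ¬ G.Adj y x4 := fun h => no4 h6 hy2.symm a23 a34 h.symm hy_3 n24
  have szx4 : ¬ G.Adj z x4 := fun h => no4 h6 hz2.symm a23 a34 h.symm hz_3 n24
  have s63 : ¬ G.Adj x6 x3 := fun h => ch36 h.symm
  -- static non-adjacencies: colour class 1
  have s5e : ¬ G.Adj x5 e := fun h => no4 h6 a56 hd6 hde h.symm hd_5.symm he6.symm
  have sp5 : ¬ G.Adj p x5 := fun h => no4 h6 h a56 a61 hp1 hp_6 n15.symm
  have sq5 : ¬ G.Adj q x5 := fun h => no4 h6 h a56 a61 hq1 hq_6 n15.symm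
  have spe : ¬ G.Adj p e :=
    fun h => no5 h6 hde.symm hd6.symm a61 hp1 h he6 ne1 hd_1 ndp hp_6.symm
  have sqe : ¬ G.Adj q e :=
    fun h => no5 h6 hde.symm hd6.symm a61 hq1 h he6 ne1 hd_1 ndq hq_6.symm
  have sy5 : ¬ G.Adj y x5 := fun h => no5 h6 hy2.symm a23 a34 a45 h.symm hy_3 ny4 n24 n25 n35
  have sz5 : ¬ G.Adj z x5 := fun h => no5 h6 hz2.symm a23 a34 a45 h.symm hz_3 nz4 n24 n25 n35
  have syq : ¬ G.Adj y q := fun h => no4 h6 h hq1.symm a12 hy2 hy_1 hq_2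
  have syp : ¬ G.Adj y p := fun h => no4 h6 h hp1.symm a12 hy2 hy_1 hp_2
  have szq : ¬ G.Adj z q := fun h => no4 h6 h hq1.symm a12 hz2 hz_1 hq_2
  have szp : ¬ G.Adj z p := fun h => no4 h6 h hp1.symm a12 hz2 hz_1 hp_2
 
  by_cases hx3e : G.Adj x3 e
  · by_cases hye : G.Adj y e
    · have szce : ¬ G.Adj z e := fun hh => no4 h6 hye hh.symm hz2.symm hy2 hyz ne2
      obtain ⟨c1, c2, c3, hc12, hc13, hc23, hAc1, hAc2, hAc3, hc1_1, hc2_1, hc3_1⟩ :=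
        three_of G (hdeg p) hp1.symm
      obtain ⟨b, hbmem, hb_e, hb_j⟩ := pick3 (P := fun w => G.Adj w e) (Q := fun w => G.Adj w e)
        (a := c1) (b := c2) (c := c3)
        (fun h1 h2 => no4 h6 h1 h2.symm hAc2.symm hAc1 hc12 nep)
        (fun h1 h2 => no4 h6 h1 h2.symm hAc3.symm hAc1 hc13 nep)
        (fun h1 h2 => no4 h6 h1 h2.symm hAc3.symm hAc2 hc23 nep)
        (fun h1 h2 => no4 h6 h1 h2.symm hAc2.symm hAc1 hc12 nep)
        (fun h1 h2 => no4 h6 h1 h2.symm hAc3.symm hAc1 hc13 nep)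
        (fun h1 h2 => no4 h6 h1 h2.symm hAc3.symm hAc2 hc23 nep)
      have hbp : G.Adj p b := by rcases hbmem with rfl|rfl|rfl <;> assumption
      have hb_1 : b ≠ x1 := by rcases hbmem with rfl|rfl|rfl <;> assumption
      have nb2b : b ≠ x2 := by intro hh; subst hh; exact no3 h6 hbp a12.symm hp1
      have nb3b : b ≠ x3 := by intro hh; subst hh; exact no4 h6 hbp a23.symm a12.symm hp1 hp_2 n13.symm
      have nb4b : b ≠ x4 := by intro hh; subst hh; exact spx4 hbp
      have nb6b : b ≠ x6 := by intro hh; subst hh; exact no3 h6 hbp a61 hp1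
      have nbdb : b ≠ d := by intro hh; subst hh; exact spd hbp
      have nbyb : b ≠ y := by intro hh; subst hh; exact spy hbp
      have nbzb : b ≠ z := by intro hh; subst hh; exact spz hbp
      have sb5b : ¬ G.Adj b x5 := fun hh => no5 h6 hh a56 a61 hp1 hbp nb6b hb_1 n15.symm np5.symm hp_6.symm
      have sA1bb : ¬ G.Adj q b := fun hh => no4 h6 hh hbp.symm hp1.symm hq1 hpq.symm hb_1
      have sybb : ¬ G.Adj y b := fun hh => no5 h6 hh hbp.symm hp1.symm a12 hy2 nyp hy_1 hb_1 nb2b hp_2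
      have szbb : ¬ G.Adj z b := fun hh => no5 h6 hh hbp.symm hp1.symm a12 hz2 nzp hz_1 hb_1 nb2b hp_2
      exact build G hreg x1 x2 x6 x3 p d y x4 q b x5 e z e e x5
          hq1 hp1 a61.symm a12 hbp a56.symm hd6 hde hz2 hy2 a23 hye hx3e a34 a45 sA1bb sq5 sqe sqz
          sqe sqe sq5 sb5b hb_j (fun hsymm => szbb hsymm.symm) hb_j hb_j sb5b s5e
          (fun hsymm => sz5 hsymm.symm) s5e s5e (G.loopless.irrefl x5) (fun hsymm => szce hsymm.symm)
          (G.loopless.irrefl e) (G.loopless.irrefl e) (fun hsymm => s5e hsymm.symm) szce szce sz5 (G.loopless.irrefl e)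
          (fun hsymm => s5e hsymm.symm) (fun hsymm => s5e hsymm.symm) spd spy spx4 sdy sdx4 syx4 s63
          n13 hd_1.symm hy_1.symm n14 hb_1.symm n15 ne1.symm hz_1.symm ne1.symm ne1.symm n15 n26
          hp_2.symm nd2.symm n24 hq_2.symm nb2b.symm n25 ne2.symm ne2.symm ne2.symm n25 hp_6.symm
          ny6.symm n46.symm hq_6.symm nb6b.symm he6.symm nz6.symm he6.symm he6.symm n56.symm
          np3.symm nd3.symm hy_3.symm nq3.symm nb3b.symm n35 ne3.symm hz_3.symm ne3.symm n35 hpq np5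
          nep.symm nzp.symm nep.symm nep.symm np5 ndq nbdb.symm hd_5 nzd.symm ned.symm ned.symm hd_5
          nyq nbyb.symm ny5 nye hyz nye ny5 nq4.symm nb4b.symm n45 ne4.symm nz4.symm ne4.symm
          ne4.symm
    by_cases hze : G.Adj z e
    · obtain ⟨c1, c2, c3, hc12, hc13, hc23, hAc1, hAc2, hAc3, hc1_1, hc2_1, hc3_1⟩ :=
        three_of G (hdeg p) hp1.symm
      obtain ⟨b, hbmem, hb_e, hb_j⟩ := pick3 (P := fun w => G.Adj w e) (Q := fun w => G.Adj w e)
        (a := c1) (b := c2) (c := c3)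
        (fun h1 h2 => no4 h6 h1 h2.symm hAc2.symm hAc1 hc12 nep)
        (fun h1 h2 => no4 h6 h1 h2.symm hAc3.symm hAc1 hc13 nep)
        (fun h1 h2 => no4 h6 h1 h2.symm hAc3.symm hAc2 hc23 nep)
        (fun h1 h2 => no4 h6 h1 h2.symm hAc2.symm hAc1 hc12 nep)
        (fun h1 h2 => no4 h6 h1 h2.symm hAc3.symm hAc1 hc13 nep)
        (fun h1 h2 => no4 h6 h1 h2.symm hAc3.symm hAc2 hc23 nep)
      have hbp : G.Adj p b := by rcases hbmem with rfl|rfl|rfl <;> assumption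
      have hb_1 : b ≠ x1 := by rcases hbmem with rfl|rfl|rfl <;> assumption
      have nb2b : b ≠ x2 := by intro hh; subst hh; exact no3 h6 hbp a12.symm hp1
      have nb3b : b ≠ x3 := by intro hh; subst hh; exact no4 h6 hbp a23.symm a12.symm hp1 hp_2 n13.symm
      have nb4b : b ≠ x4 := by intro hh; subst hh; exact spx4 hbp
      have nb6b : b ≠ x6 := by intro hh; subst hh; exact no3 h6 hbp a61 hp1
      have nbdb : b ≠ d := by intro hh; subst hh; exact spd hbp
      have nbyb : b ≠ y := by intro hh; subst hh; exact spy hbp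
      have nbzb : b ≠ z := by intro hh; subst hh; exact spz hbp
      have sb5b : ¬ G.Adj b x5 := fun hh => no5 h6 hh a56 a61 hp1 hbp nb6b hb_1 n15.symm np5.symm hp_6.symm
      have sA1bb : ¬ G.Adj q b := fun hh => no4 h6 hh hbp.symm hp1.symm hq1 hpq.symm hb_1
      have sybb : ¬ G.Adj y b := fun hh => no5 h6 hh hbp.symm hp1.symm a12 hy2 nyp hy_1 hb_1 nb2b hp_2
      have szbb : ¬ G.Adj z b := fun hh => no5 h6 hh hbp.symm hp1.symm a12 hz2 nzp hz_1 hb_1 nb2b hp_2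
      exact build G hreg x1 x2 x6 x3 p d z x4 q b x5 e y e e x5
          hq1 hp1 a61.symm a12 hbp a56.symm hd6 hde hy2 hz2 a23 hze hx3e a34 a45 sA1bb sq5 sqe sqy
          sqe sqe sq5 sb5b hb_j (fun hsymm => sybb hsymm.symm) hb_j hb_j sb5b s5e
          (fun hsymm => sy5 hsymm.symm) s5e s5e (G.loopless.irrefl x5) (fun hsymm => hye hsymm.symm)
          (G.loopless.irrefl e) (G.loopless.irrefl e) (fun hsymm => s5e hsymm.symm) hye hye sy5 (G.loopless.irrefl e)
          (fun hsymm => s5e hsymm.symm) (fun hsymm => s5e hsymm.symm) spd spz spx4 sdz sdx4 szx4 s63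
          n13 hd_1.symm hz_1.symm n14 hb_1.symm n15 ne1.symm hy_1.symm ne1.symm ne1.symm n15 n26
          hp_2.symm nd2.symm n24 hq_2.symm nb2b.symm n25 ne2.symm ne2.symm ne2.symm n25 hp_6.symm
          nz6.symm n46.symm hq_6.symm nb6b.symm he6.symm ny6.symm he6.symm he6.symm n56.symm
          np3.symm nd3.symm hz_3.symm nq3.symm nb3b.symm n35 ne3.symm hy_3.symm ne3.symm n35 hpq np5
          nep.symm nyp.symm nep.symm nep.symm np5 ndq nbdb.symm hd_5 nyd.symm ned.symm ned.symm hd_5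
          nzq nbzb.symm nz5 nze hyz.symm nze nz5 nq4.symm nb4b.symm n45 ne4.symm ny4.symm ne4.symm
          ne4.symm
    obtain ⟨c1, c2, c3, hc12, hc13, hc23, hAc1, hAc2, hAc3, hc1_1, hc2_1, hc3_1⟩ :=
      three_of G (hdeg p) hp1.symm
    obtain ⟨b, hbmem, hb_e, hb_j⟩ := pick3 (P := fun w => G.Adj w e) (Q := fun w => G.Adj w e)
      (a := c1) (b := c2) (c := c3)
      (fun h1 h2 => no4 h6 h1 h2.symm hAc2.symm hAc1 hc12 nep)
      (fun h1 h2 => no4 h6 h1 h2.symm hAc3.symm hAc1 hc13 nep)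
      (fun h1 h2 => no4 h6 h1 h2.symm hAc3.symm hAc2 hc23 nep)
      (fun h1 h2 => no4 h6 h1 h2.symm hAc2.symm hAc1 hc12 nep)
      (fun h1 h2 => no4 h6 h1 h2.symm hAc3.symm hAc1 hc13 nep)
      (fun h1 h2 => no4 h6 h1 h2.symm hAc3.symm hAc2 hc23 nep)
    have hbp : G.Adj p b := by rcases hbmem with rfl|rfl|rfl <;> assumption
    have hb_1 : b ≠ x1 := by rcases hbmem with rfl|rfl|rfl <;> assumption
    have nb2b : b ≠ x2 := by intro hh; subst hh; exact no3 h6 hbp a12.symm hp1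
    have nb3b : b ≠ x3 := by intro hh; subst hh; exact no4 h6 hbp a23.symm a12.symm hp1 hp_2 n13.symm
    have nb4b : b ≠ x4 := by intro hh; subst hh; exact spx4 hbp
    have nb6b : b ≠ x6 := by intro hh; subst hh; exact no3 h6 hbp a61 hp1
    have nbdb : b ≠ d := by intro hh; subst hh; exact spd hbp
    have nbyb : b ≠ y := by intro hh; subst hh; exact spy hbp
    have nbzb : b ≠ z := by intro hh; subst hh; exact spz hbp
    have sb5b : ¬ G.Adj b x5 := fun hh => no5 h6 hh a56 a61 hp1 hbp nb6b hb_1 n15.symm np5.symm hp_6.symm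
    have sA1bb : ¬ G.Adj q b := fun hh => no4 h6 hh hbp.symm hp1.symm hq1 hpq.symm hb_1
    have sybb : ¬ G.Adj y b := fun hh => no5 h6 hh hbp.symm hp1.symm a12 hy2 nyp hy_1 hb_1 nb2b hp_2
    have szbb : ¬ G.Adj z b := fun hh => no5 h6 hh hbp.symm hp1.symm a12 hz2 nzp hz_1 hb_1 nb2b hp_2
    obtain ⟨u1, u2, u3, hu12, hu13, hu23, hyu1, hyu2, hyu3, hu1_2, hu2_2, hu3_2⟩ :=
      three_of G (hdeg y) hy2.symm
    by_cases hg1 : ¬G.Adj u1 x5 ∧ ¬G.Adj u1 e ∧ ¬G.Adj u1 b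
    · have ni1u1 : u1 ≠ x1 := by intro hh; subst hh; exact no3 h6 a12 hy2 hyu1
      have ni3u1 : u1 ≠ x3 := by intro hh; subst hh; exact no3 h6 hy2 hyu1 a23.symm
      have ni6u1 : u1 ≠ x6 := by intro hh; subst hh; exact no4 h6 a61 a12 hy2 hyu1 n26.symm hy_1.symm
      have nipu1 : u1 ≠ p := by intro hh; subst hh; exact spy hyu1.symm
      have niqu1 : u1 ≠ q := by intro hh; subst hh; exact sqy hyu1.symm
      have nidu1 : u1 ≠ d := by intro hh; subst hh; exact sdy hyu1.symm
      have ni4u1 : u1 ≠ x4 := by intro hh; subst hh; exact syx4 hyu1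
      have sA1iu1 : ¬ G.Adj q u1 := fun hh => no5 h6 hh hyu1.symm hy2.symm a12.symm hq1 nyq.symm hq_2 hu1_2 ni1u1 hy_1
      have sfiu1 : ¬ G.Adj z u1 := fun hh => no4 h6 hh hyu1.symm hy2.symm hz2 hyz.symm hu1_2
      have siju1 : ¬ G.Adj u1 e := hg1.2.1
      exact build G hreg x1 x2 x6 x3 p d y x4 q b x5 e z u1 e x5
          hq1 hp1 a61.symm a12 hbp a56.symm hd6 hde hz2 hy2 a23 hyu1 hx3e a34 a45 sA1bb sq5 sqe sqz
          sA1iu1 sqe sq5 sb5b hb_j (fun hsymm => szbb hsymm.symm) (fun hsymm => hg1.2.2 hsymm.symm)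
          hb_j sb5b s5e (fun hsymm => sz5 hsymm.symm) (fun hsymm => hg1.1 hsymm.symm) s5e
          (G.loopless.irrefl x5) (fun hsymm => hze hsymm.symm) (fun hsymm => siju1 hsymm.symm)
          (G.loopless.irrefl e) (fun hsymm => s5e hsymm.symm) sfiu1 hze sz5 siju1 hg1.1
          (fun hsymm => s5e hsymm.symm) spd spy spx4 sdy sdx4 syx4 s63 n13 hd_1.symm hy_1.symm n14
          hb_1.symm n15 ne1.symm hz_1.symm ni1u1.symm ne1.symm n15 n26 hp_2.symm nd2.symm n24
          hq_2.symm nb2b.symm n25 ne2.symm hu1_2.symm ne2.symm n25 hp_6.symm ny6.symm n46.symm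
          hq_6.symm nb6b.symm he6.symm nz6.symm ni6u1.symm he6.symm n56.symm np3.symm nd3.symm
          hy_3.symm nq3.symm nb3b.symm n35 ne3.symm hz_3.symm ni3u1.symm n35 hpq np5 nep.symm
          nzp.symm nipu1.symm nep.symm np5 ndq nbdb.symm hd_5 nzd.symm nidu1.symm ned.symm hd_5 nyq
          nbyb.symm ny5 nye hyz nye ny5 nq4.symm nb4b.symm n45 ne4.symm nz4.symm ni4u1.symm ne4.symm
    by_cases hg2 : ¬G.Adj u2 x5 ∧ ¬G.Adj u2 e ∧ ¬G.Adj u2 b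
    · have ni1u2 : u2 ≠ x1 := by intro hh; subst hh; exact no3 h6 a12 hy2 hyu2
      have ni3u2 : u2 ≠ x3 := by intro hh; subst hh; exact no3 h6 hy2 hyu2 a23.symm
      have ni6u2 : u2 ≠ x6 := by intro hh; subst hh; exact no4 h6 a61 a12 hy2 hyu2 n26.symm hy_1.symm
      have nipu2 : u2 ≠ p := by intro hh; subst hh; exact spy hyu2.symm
      have niqu2 : u2 ≠ q := by intro hh; subst hh; exact sqy hyu2.symm
      have nidu2 : u2 ≠ d := by intro hh; subst hh; exact sdy hyu2.symm
      have ni4u2 : u2 ≠ x4 := by intro hh; subst hh; exact syx4 hyu2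
      have sA1iu2 : ¬ G.Adj q u2 := fun hh => no5 h6 hh hyu2.symm hy2.symm a12.symm hq1 nyq.symm hq_2 hu2_2 ni1u2 hy_1
      have sfiu2 : ¬ G.Adj z u2 := fun hh => no4 h6 hh hyu2.symm hy2.symm hz2 hyz.symm hu2_2
      have siju2 : ¬ G.Adj u2 e := hg2.2.1
      exact build G hreg x1 x2 x6 x3 p d y x4 q b x5 e z u2 e x5
          hq1 hp1 a61.symm a12 hbp a56.symm hd6 hde hz2 hy2 a23 hyu2 hx3e a34 a45 sA1bb sq5 sqe sqz
          sA1iu2 sqe sq5 sb5b hb_j (fun hsymm => szbb hsymm.symm) (fun hsymm => hg2.2.2 hsymm.symm)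
          hb_j sb5b s5e (fun hsymm => sz5 hsymm.symm) (fun hsymm => hg2.1 hsymm.symm) s5e
          (G.loopless.irrefl x5) (fun hsymm => hze hsymm.symm) (fun hsymm => siju2 hsymm.symm)
          (G.loopless.irrefl e) (fun hsymm => s5e hsymm.symm) sfiu2 hze sz5 siju2 hg2.1
          (fun hsymm => s5e hsymm.symm) spd spy spx4 sdy sdx4 syx4 s63 n13 hd_1.symm hy_1.symm n14
          hb_1.symm n15 ne1.symm hz_1.symm ni1u2.symm ne1.symm n15 n26 hp_2.symm nd2.symm n24
          hq_2.symm nb2b.symm n25 ne2.symm hu2_2.symm ne2.symm n25 hp_6.symm ny6.symm n46.symm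
          hq_6.symm nb6b.symm he6.symm nz6.symm ni6u2.symm he6.symm n56.symm np3.symm nd3.symm
          hy_3.symm nq3.symm nb3b.symm n35 ne3.symm hz_3.symm ni3u2.symm n35 hpq np5 nep.symm
          nzp.symm nipu2.symm nep.symm np5 ndq nbdb.symm hd_5 nzd.symm nidu2.symm ned.symm hd_5 nyq
          nbyb.symm ny5 nye hyz nye ny5 nq4.symm nb4b.symm n45 ne4.symm nz4.symm ni4u2.symm ne4.symm
    by_cases hg3 : ¬G.Adj u3 x5 ∧ ¬G.Adj u3 e ∧ ¬G.Adj u3 b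
    · have ni1u3 : u3 ≠ x1 := by intro hh; subst hh; exact no3 h6 a12 hy2 hyu3
      have ni3u3 : u3 ≠ x3 := by intro hh; subst hh; exact no3 h6 hy2 hyu3 a23.symm
      have ni6u3 : u3 ≠ x6 := by intro hh; subst hh; exact no4 h6 a61 a12 hy2 hyu3 n26.symm hy_1.symm
      have nipu3 : u3 ≠ p := by intro hh; subst hh; exact spy hyu3.symm
      have niqu3 : u3 ≠ q := by intro hh; subst hh; exact sqy hyu3.symm
      have nidu3 : u3 ≠ d := by intro hh; subst hh; exact sdy hyu3.symm
      have ni4u3 : u3 ≠ x4 := by intro hh; subst hh; exact syx4 hyu3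
      have sA1iu3 : ¬ G.Adj q u3 := fun hh => no5 h6 hh hyu3.symm hy2.symm a12.symm hq1 nyq.symm hq_2 hu3_2 ni1u3 hy_1
      have sfiu3 : ¬ G.Adj z u3 := fun hh => no4 h6 hh hyu3.symm hy2.symm hz2 hyz.symm hu3_2
      have siju3 : ¬ G.Adj u3 e := hg3.2.1
      exact build G hreg x1 x2 x6 x3 p d y x4 q b x5 e z u3 e x5
          hq1 hp1 a61.symm a12 hbp a56.symm hd6 hde hz2 hy2 a23 hyu3 hx3e a34 a45 sA1bb sq5 sqe sqz
          sA1iu3 sqe sq5 sb5b hb_j (fun hsymm => szbb hsymm.symm) (fun hsymm => hg3.2.2 hsymm.symm)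
          hb_j sb5b s5e (fun hsymm => sz5 hsymm.symm) (fun hsymm => hg3.1 hsymm.symm) s5e
          (G.loopless.irrefl x5) (fun hsymm => hze hsymm.symm) (fun hsymm => siju3 hsymm.symm)
          (G.loopless.irrefl e) (fun hsymm => s5e hsymm.symm) sfiu3 hze sz5 siju3 hg3.1
          (fun hsymm => s5e hsymm.symm) spd spy spx4 sdy sdx4 syx4 s63 n13 hd_1.symm hy_1.symm n14
          hb_1.symm n15 ne1.symm hz_1.symm ni1u3.symm ne1.symm n15 n26 hp_2.symm nd2.symm n24
          hq_2.symm nb2b.symm n25 ne2.symm hu3_2.symm ne2.symm n25 hp_6.symm ny6.symm n46.symm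
          hq_6.symm nb6b.symm he6.symm nz6.symm ni6u3.symm he6.symm n56.symm np3.symm nd3.symm
          hy_3.symm nq3.symm nb3b.symm n35 ne3.symm hz_3.symm ni3u3.symm n35 hpq np5 nep.symm
          nzp.symm nipu3.symm nep.symm np5 ndq nbdb.symm hd_5 nzd.symm nidu3.symm ned.symm hd_5 nyq
          nbyb.symm ny5 nye hyz nye ny5 nq4.symm nb4b.symm n45 ne4.symm nz4.symm ni4u3.symm ne4.symm
    obtain ⟨v1, v2, v3, hv12, hv13, hv23, hzv1, hzv2, hzv3, hv1_2, hv2_2, hv3_2⟩ :=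
      three_of G (hdeg z) hz2.symm
    by_cases hh1 : ¬G.Adj v1 x5 ∧ ¬G.Adj v1 e ∧ ¬G.Adj v1 b
    · have ni1v1 : v1 ≠ x1 := by intro hh; subst hh; exact no3 h6 a12 hz2 hzv1
      have ni3v1 : v1 ≠ x3 := by intro hh; subst hh; exact no3 h6 hz2 hzv1 a23.symm
      have ni6v1 : v1 ≠ x6 := by intro hh; subst hh; exact no4 h6 a61 a12 hz2 hzv1 n26.symm hz_1.symm
      have nipv1 : v1 ≠ p := by intro hh; subst hh; exact spz hzv1.symm
      have niqv1 : v1 ≠ q := by intro hh; subst hh; exact sqz hzv1.symm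
      have nidv1 : v1 ≠ d := by intro hh; subst hh; exact sdz hzv1.symm
      have ni4v1 : v1 ≠ x4 := by intro hh; subst hh; exact szx4 hzv1
      have sA1iv1 : ¬ G.Adj q v1 := fun hh => no5 h6 hh hzv1.symm hz2.symm a12.symm hq1 nzq.symm hq_2 hv1_2 ni1v1 hz_1
      have sfiv1 : ¬ G.Adj y v1 := fun hh => no4 h6 hh hzv1.symm hz2.symm hy2 hyz hv1_2
      have sijv1 : ¬ G.Adj v1 e := hh1.2.1
      exact build G hreg x1 x2 x6 x3 p d z x4 q b x5 e y v1 e x5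
          hq1 hp1 a61.symm a12 hbp a56.symm hd6 hde hy2 hz2 a23 hzv1 hx3e a34 a45 sA1bb sq5 sqe sqy
          sA1iv1 sqe sq5 sb5b hb_j (fun hsymm => sybb hsymm.symm) (fun hsymm => hh1.2.2 hsymm.symm)
          hb_j sb5b s5e (fun hsymm => sy5 hsymm.symm) (fun hsymm => hh1.1 hsymm.symm) s5e
          (G.loopless.irrefl x5) (fun hsymm => hye hsymm.symm) (fun hsymm => sijv1 hsymm.symm)
          (G.loopless.irrefl e) (fun hsymm => s5e hsymm.symm) sfiv1 hye sy5 sijv1 hh1.1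
          (fun hsymm => s5e hsymm.symm) spd spz spx4 sdz sdx4 szx4 s63 n13 hd_1.symm hz_1.symm n14
          hb_1.symm n15 ne1.symm hy_1.symm ni1v1.symm ne1.symm n15 n26 hp_2.symm nd2.symm n24
          hq_2.symm nb2b.symm n25 ne2.symm hv1_2.symm ne2.symm n25 hp_6.symm nz6.symm n46.symm
          hq_6.symm nb6b.symm he6.symm ny6.symm ni6v1.symm he6.symm n56.symm np3.symm nd3.symm
          hz_3.symm nq3.symm nb3b.symm n35 ne3.symm hy_3.symm ni3v1.symm n35 hpq np5 nep.symm
          nyp.symm nipv1.symm nep.symm np5 ndq nbdb.symm hd_5 nyd.symm nidv1.symm ned.symm hd_5 nzq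
          nbzb.symm nz5 nze hyz.symm nze nz5 nq4.symm nb4b.symm n45 ne4.symm ny4.symm ni4v1.symm
          ne4.symm
    by_cases hh2 : ¬G.Adj v2 x5 ∧ ¬G.Adj v2 e ∧ ¬G.Adj v2 b
    · have ni1v2 : v2 ≠ x1 := by intro hh; subst hh; exact no3 h6 a12 hz2 hzv2
      have ni3v2 : v2 ≠ x3 := by intro hh; subst hh; exact no3 h6 hz2 hzv2 a23.symm
      have ni6v2 : v2 ≠ x6 := by intro hh; subst hh; exact no4 h6 a61 a12 hz2 hzv2 n26.symm hz_1.symm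
      have nipv2 : v2 ≠ p := by intro hh; subst hh; exact spz hzv2.symm
      have niqv2 : v2 ≠ q := by intro hh; subst hh; exact sqz hzv2.symm
      have nidv2 : v2 ≠ d := by intro hh; subst hh; exact sdz hzv2.symm
      have ni4v2 : v2 ≠ x4 := by intro hh; subst hh; exact szx4 hzv2
      have sA1iv2 : ¬ G.Adj q v2 := fun hh => no5 h6 hh hzv2.symm hz2.symm a12.symm hq1 nzq.symm hq_2 hv2_2 ni1v2 hz_1
      have sfiv2 : ¬ G.Adj y v2 := fun hh => no4 h6 hh hzv2.symm hz2.symm hy2 hyz hv2_2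
      have sijv2 : ¬ G.Adj v2 e := hh2.2.1
      exact build G hreg x1 x2 x6 x3 p d z x4 q b x5 e y v2 e x5
          hq1 hp1 a61.symm a12 hbp a56.symm hd6 hde hy2 hz2 a23 hzv2 hx3e a34 a45 sA1bb sq5 sqe sqy
          sA1iv2 sqe sq5 sb5b hb_j (fun hsymm => sybb hsymm.symm) (fun hsymm => hh2.2.2 hsymm.symm)
          hb_j sb5b s5e (fun hsymm => sy5 hsymm.symm) (fun hsymm => hh2.1 hsymm.symm) s5e
          (G.loopless.irrefl x5) (fun hsymm => hye hsymm.symm) (fun hsymm => sijv2 hsymm.symm)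
          (G.loopless.irrefl e) (fun hsymm => s5e hsymm.symm) sfiv2 hye sy5 sijv2 hh2.1
          (fun hsymm => s5e hsymm.symm) spd spz spx4 sdz sdx4 szx4 s63 n13 hd_1.symm hz_1.symm n14
          hb_1.symm n15 ne1.symm hy_1.symm ni1v2.symm ne1.symm n15 n26 hp_2.symm nd2.symm n24
          hq_2.symm nb2b.symm n25 ne2.symm hv2_2.symm ne2.symm n25 hp_6.symm nz6.symm n46.symm
          hq_6.symm nb6b.symm he6.symm ny6.symm ni6v2.symm he6.symm n56.symm np3.symm nd3.symm
          hz_3.symm nq3.symm nb3b.symm n35 ne3.symm hy_3.symm ni3v2.symm n35 hpq np5 nep.symm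
          nyp.symm nipv2.symm nep.symm np5 ndq nbdb.symm hd_5 nyd.symm nidv2.symm ned.symm hd_5 nzq
          nbzb.symm nz5 nze hyz.symm nze nz5 nq4.symm nb4b.symm n45 ne4.symm ny4.symm ni4v2.symm
          ne4.symm
    by_cases hh3 : ¬G.Adj v3 x5 ∧ ¬G.Adj v3 e ∧ ¬G.Adj v3 b
    · have ni1v3 : v3 ≠ x1 := by intro hh; subst hh; exact no3 h6 a12 hz2 hzv3
      have ni3v3 : v3 ≠ x3 := by intro hh; subst hh; exact no3 h6 hz2 hzv3 a23.symm
      have ni6v3 : v3 ≠ x6 := by intro hh; subst hh; exact no4 h6 a61 a12 hz2 hzv3 n26.symm hz_1.symm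
      have nipv3 : v3 ≠ p := by intro hh; subst hh; exact spz hzv3.symm
      have niqv3 : v3 ≠ q := by intro hh; subst hh; exact sqz hzv3.symm
      have nidv3 : v3 ≠ d := by intro hh; subst hh; exact sdz hzv3.symm
      have ni4v3 : v3 ≠ x4 := by intro hh; subst hh; exact szx4 hzv3
      have sA1iv3 : ¬ G.Adj q v3 := fun hh => no5 h6 hh hzv3.symm hz2.symm a12.symm hq1 nzq.symm hq_2 hv3_2 ni1v3 hz_1
      have sfiv3 : ¬ G.Adj y v3 := fun hh => no4 h6 hh hzv3.symm hz2.symm hy2 hyz hv3_2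
      have sijv3 : ¬ G.Adj v3 e := hh3.2.1
      exact build G hreg x1 x2 x6 x3 p d z x4 q b x5 e y v3 e x5
          hq1 hp1 a61.symm a12 hbp a56.symm hd6 hde hy2 hz2 a23 hzv3 hx3e a34 a45 sA1bb sq5 sqe sqy
          sA1iv3 sqe sq5 sb5b hb_j (fun hsymm => sybb hsymm.symm) (fun hsymm => hh3.2.2 hsymm.symm)
          hb_j sb5b s5e (fun hsymm => sy5 hsymm.symm) (fun hsymm => hh3.1 hsymm.symm) s5e
          (G.loopless.irrefl x5) (fun hsymm => hye hsymm.symm) (fun hsymm => sijv3 hsymm.symm)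
          (G.loopless.irrefl e) (fun hsymm => s5e hsymm.symm) sfiv3 hye sy5 sijv3 hh3.1
          (fun hsymm => s5e hsymm.symm) spd spz spx4 sdz sdx4 szx4 s63 n13 hd_1.symm hz_1.symm n14
          hb_1.symm n15 ne1.symm hy_1.symm ni1v3.symm ne1.symm n15 n26 hp_2.symm nd2.symm n24
          hq_2.symm nb2b.symm n25 ne2.symm hv3_2.symm ne2.symm n25 hp_6.symm nz6.symm n46.symm
          hq_6.symm nb6b.symm he6.symm ny6.symm ni6v3.symm he6.symm n56.symm np3.symm nd3.symm
          hz_3.symm nq3.symm nb3b.symm n35 ne3.symm hy_3.symm ni3v3.symm n35 hpq np5 nep.symm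
          nyp.symm nipv3.symm nep.symm np5 ndq nbdb.symm hd_5 nyd.symm nidv3.symm ned.symm hd_5 nzq
          nbzb.symm nz5 nze hyz.symm nze nz5 nq4.symm nb4b.symm n45 ne4.symm ny4.symm ni4v3.symm
          ne4.symm
    have bl1 : G.Adj u1 x5 ∨ G.Adj u1 e ∨ G.Adj u1 b := by
      by_contra hc; push_neg at hc; exact hg1 ⟨hc.1, hc.2.1, hc.2.2⟩
    have bl2 : G.Adj u2 x5 ∨ G.Adj u2 e ∨ G.Adj u2 b := by
      by_contra hc; push_neg at hc; exact hg2 ⟨hc.1, hc.2.1, hc.2.2⟩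
    have bl3 : G.Adj u3 x5 ∨ G.Adj u3 e ∨ G.Adj u3 b := by
      by_contra hc; push_neg at hc; exact hg3 ⟨hc.1, hc.2.1, hc.2.2⟩
    have bm1 : G.Adj v1 x5 ∨ G.Adj v1 e ∨ G.Adj v1 b := by
      by_contra hc; push_neg at hc; exact hh1 ⟨hc.1, hc.2.1, hc.2.2⟩
    have bm2 : G.Adj v2 x5 ∨ G.Adj v2 e ∨ G.Adj v2 b := by
      by_contra hc; push_neg at hc; exact hh2 ⟨hc.1, hc.2.1, hc.2.2⟩
    have bm3 : G.Adj v3 x5 ∨ G.Adj v3 e ∨ G.Adj v3 b := by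
      by_contra hc; push_neg at hc; exact hh3 ⟨hc.1, hc.2.1, hc.2.2⟩
    obtain ⟨ue, ub, huem, hubm, hue_e, hub_b, hub_5, hub_e⟩ :=
      extract3 (P := fun w => G.Adj w x5) (Q := fun w => G.Adj w e) (R := fun w => G.Adj w b)
        (a := u1) (b := u2) (c := u3)
        (fun ha1 ha2 => no4 h6 ha1 ha2.symm hyu2.symm hyu1 hu12 ny5.symm)
        (fun ha1 ha2 => no4 h6 ha1 ha2.symm hyu3.symm hyu1 hu13 ny5.symm)
        (fun ha1 ha2 => no4 h6 ha1 ha2.symm hyu3.symm hyu2 hu23 ny5.symm)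
        (fun ha1 ha2 => no4 h6 ha1 ha2.symm hyu2.symm hyu1 hu12 nye.symm)
        (fun ha1 ha2 => no4 h6 ha1 ha2.symm hyu3.symm hyu1 hu13 nye.symm)
        (fun ha1 ha2 => no4 h6 ha1 ha2.symm hyu3.symm hyu2 hu23 nye.symm)
        (fun ha1 ha2 => no4 h6 ha1 ha2.symm hyu2.symm hyu1 hu12 nbyb)
        (fun ha1 ha2 => no4 h6 ha1 ha2.symm hyu3.symm hyu1 hu13 nbyb)
        (fun ha1 ha2 => no4 h6 ha1 ha2.symm hyu3.symm hyu2 hu23 nbyb)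
        bl1 bl2 bl3
    obtain ⟨ve, vr, hvem, hvrm, hve_e, hvr_b, hvr_5, hvr_e⟩ :=
      extract3 (P := fun w => G.Adj w x5) (Q := fun w => G.Adj w e) (R := fun w => G.Adj w b)
        (a := v1) (b := v2) (c := v3)
        (fun ha1 ha2 => no4 h6 ha1 ha2.symm hzv2.symm hzv1 hv12 nz5.symm)
        (fun ha1 ha2 => no4 h6 ha1 ha2.symm hzv3.symm hzv1 hv13 nz5.symm)
        (fun ha1 ha2 => no4 h6 ha1 ha2.symm hzv3.symm hzv2 hv23 nz5.symm)
        (fun ha1 ha2 => no4 h6 ha1 ha2.symm hzv2.symm hzv1 hv12 nze.symm)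
        (fun ha1 ha2 => no4 h6 ha1 ha2.symm hzv3.symm hzv1 hv13 nze.symm)
        (fun ha1 ha2 => no4 h6 ha1 ha2.symm hzv3.symm hzv2 hv23 nze.symm)
        (fun ha1 ha2 => no4 h6 ha1 ha2.symm hzv2.symm hzv1 hv12 nbzb)
        (fun ha1 ha2 => no4 h6 ha1 ha2.symm hzv3.symm hzv1 hv13 nbzb)
        (fun ha1 ha2 => no4 h6 ha1 ha2.symm hzv3.symm hzv2 hv23 nbzb)
        bm1 bm2 bm3
    have hyue : G.Adj y ue := by rcases huem with rfl|rfl|rfl <;> assumption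
    have hue2 : ue ≠ x2 := by rcases huem with rfl|rfl|rfl <;> assumption
    have hyub : G.Adj y ub := by rcases hubm with rfl|rfl|rfl <;> assumption
    have hub2 : ub ≠ x2 := by rcases hubm with rfl|rfl|rfl <;> assumption
    have hzve : G.Adj z ve := by rcases hvem with rfl|rfl|rfl <;> assumption
    have hve2 : ve ≠ x2 := by rcases hvem with rfl|rfl|rfl <;> assumption
    have nue1 : ue ≠ x1 := by intro hh; subst hh; exact no3 h6 a12 hy2 hyue
    have nve1 : ve ≠ x1 := by intro hh; subst hh; exact no3 h6 a12 hz2 hzve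
    have ni1ub : ub ≠ x1 := by intro hh; subst hh; exact no3 h6 a12 hy2 hyub
    have ni3ub : ub ≠ x3 := by intro hh; subst hh; exact no3 h6 hy2 hyub a23.symm
    have ni6ub : ub ≠ x6 := by intro hh; subst hh; exact no4 h6 a61 a12 hy2 hyub n26.symm hy_1.symm
    have nipub : ub ≠ p := by intro hh; subst hh; exact spy hyub.symm
    have niqub : ub ≠ q := by intro hh; subst hh; exact sqy hyub.symm
    have nidub : ub ≠ d := by intro hh; subst hh; exact sdy hyub.symm
    have ni4ub : ub ≠ x4 := by intro hh; subst hh; exact syx4 hyub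
    have sA1iub : ¬ G.Adj q ub := fun hh => no5 h6 hh hyub.symm hy2.symm a12.symm hq1 nyq.symm hq_2 hub2 ni1ub hy_1
    have sfiub : ¬ G.Adj z ub := fun hh => no4 h6 hh hyub.symm hy2.symm hz2 hyz.symm hub2
    have sijub : ¬ G.Adj ub e := hub_e
    have sPub : ¬ G.Adj p ub := fun hh => no5 h6 hh hyub.symm hy2.symm a12.symm hp1 nyp.symm hp_2 hub2 ni1ub hy_1
    by_cases hr1 : ¬G.Adj c1 e ∧ ¬G.Adj c1 e ∧ ¬G.Adj c1 ub
    · have nb2c1 : c1 ≠ x2 := by intro hh; subst hh; exact no3 h6 hAc1 a12.symm hp1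
      have nb3c1 : c1 ≠ x3 := by intro hh; subst hh; exact no4 h6 hAc1 a23.symm a12.symm hp1 hp_2 n13.symm
      have nb4c1 : c1 ≠ x4 := by intro hh; subst hh; exact spx4 hAc1
      have nb6c1 : c1 ≠ x6 := by intro hh; subst hh; exact no3 h6 hAc1 a61 hp1
      have nbdc1 : c1 ≠ d := by intro hh; subst hh; exact spd hAc1
      have nbyc1 : c1 ≠ y := by intro hh; subst hh; exact spy hAc1
      have nbzc1 : c1 ≠ z := by intro hh; subst hh; exact spz hAc1
      have sb5c1 : ¬ G.Adj c1 x5 := fun hh => no5 h6 hh a56 a61 hp1 hAc1 nb6c1 hc1_1 n15.symm np5.symm hp_6.symm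
      have sA1bc1 : ¬ G.Adj q c1 := fun hh => no4 h6 hh hAc1.symm hp1.symm hq1 hpq.symm hc1_1
      have sybc1 : ¬ G.Adj y c1 := fun hh => no5 h6 hh hAc1.symm hp1.symm a12 hy2 nyp hy_1 hc1_1 nb2c1 hp_2
      have szbc1 : ¬ G.Adj z c1 := fun hh => no5 h6 hh hAc1.symm hp1.symm a12 hz2 nzp hz_1 hc1_1 nb2c1 hp_2
      exact build G hreg x1 x2 x6 x3 p d y x4 q c1 x5 e z ub e x5
          hq1 hp1 a61.symm a12 hAc1 a56.symm hd6 hde hz2 hy2 a23 hyub hx3e a34 a45 sA1bc1 sq5 sqe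
          sqz sA1iub sqe sq5 sb5c1 hr1.2.1 (fun hsymm => szbc1 hsymm.symm) hr1.2.2 hr1.2.1 sb5c1 s5e
          (fun hsymm => sz5 hsymm.symm) (fun hsymm => hub_5 hsymm.symm) s5e (G.loopless.irrefl x5)
          (fun hsymm => hze hsymm.symm) (fun hsymm => sijub hsymm.symm) (G.loopless.irrefl e)
          (fun hsymm => s5e hsymm.symm) sfiub hze sz5 sijub hub_5 (fun hsymm => s5e hsymm.symm) spd
          spy spx4 sdy sdx4 syx4 s63 n13 hd_1.symm hy_1.symm n14 hc1_1.symm n15 ne1.symm hz_1.symm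
          ni1ub.symm ne1.symm n15 n26 hp_2.symm nd2.symm n24 hq_2.symm nb2c1.symm n25 ne2.symm
          hub2.symm ne2.symm n25 hp_6.symm ny6.symm n46.symm hq_6.symm nb6c1.symm he6.symm nz6.symm
          ni6ub.symm he6.symm n56.symm np3.symm nd3.symm hy_3.symm nq3.symm nb3c1.symm n35 ne3.symm
          hz_3.symm ni3ub.symm n35 hpq np5 nep.symm nzp.symm nipub.symm nep.symm np5 ndq nbdc1.symm
          hd_5 nzd.symm nidub.symm ned.symm hd_5 nyq nbyc1.symm ny5 nye hyz nye ny5 nq4.symm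
          nb4c1.symm n45 ne4.symm nz4.symm ni4ub.symm ne4.symm
    by_cases hr2 : ¬G.Adj c2 e ∧ ¬G.Adj c2 e ∧ ¬G.Adj c2 ub
    · have nb2c2 : c2 ≠ x2 := by intro hh; subst hh; exact no3 h6 hAc2 a12.symm hp1
      have nb3c2 : c2 ≠ x3 := by intro hh; subst hh; exact no4 h6 hAc2 a23.symm a12.symm hp1 hp_2 n13.symm
      have nb4c2 : c2 ≠ x4 := by intro hh; subst hh; exact spx4 hAc2
      have nb6c2 : c2 ≠ x6 := by intro hh; subst hh; exact no3 h6 hAc2 a61 hp1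
      have nbdc2 : c2 ≠ d := by intro hh; subst hh; exact spd hAc2
      have nbyc2 : c2 ≠ y := by intro hh; subst hh; exact spy hAc2
      have nbzc2 : c2 ≠ z := by intro hh; subst hh; exact spz hAc2
      have sb5c2 : ¬ G.Adj c2 x5 := fun hh => no5 h6 hh a56 a61 hp1 hAc2 nb6c2 hc2_1 n15.symm np5.symm hp_6.symm
      have sA1bc2 : ¬ G.Adj q c2 := fun hh => no4 h6 hh hAc2.symm hp1.symm hq1 hpq.symm hc2_1
      have sybc2 : ¬ G.Adj y c2 := fun hh => no5 h6 hh hAc2.symm hp1.symm a12 hy2 nyp hy_1 hc2_1 nb2c2 hp_2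
      have szbc2 : ¬ G.Adj z c2 := fun hh => no5 h6 hh hAc2.symm hp1.symm a12 hz2 nzp hz_1 hc2_1 nb2c2 hp_2
      exact build G hreg x1 x2 x6 x3 p d y x4 q c2 x5 e z ub e x5
          hq1 hp1 a61.symm a12 hAc2 a56.symm hd6 hde hz2 hy2 a23 hyub hx3e a34 a45 sA1bc2 sq5 sqe
          sqz sA1iub sqe sq5 sb5c2 hr2.2.1 (fun hsymm => szbc2 hsymm.symm) hr2.2.2 hr2.2.1 sb5c2 s5e
          (fun hsymm => sz5 hsymm.symm) (fun hsymm => hub_5 hsymm.symm) s5e (G.loopless.irrefl x5)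
          (fun hsymm => hze hsymm.symm) (fun hsymm => sijub hsymm.symm) (G.loopless.irrefl e)
          (fun hsymm => s5e hsymm.symm) sfiub hze sz5 sijub hub_5 (fun hsymm => s5e hsymm.symm) spd
          spy spx4 sdy sdx4 syx4 s63 n13 hd_1.symm hy_1.symm n14 hc2_1.symm n15 ne1.symm hz_1.symm
          ni1ub.symm ne1.symm n15 n26 hp_2.symm nd2.symm n24 hq_2.symm nb2c2.symm n25 ne2.symm
          hub2.symm ne2.symm n25 hp_6.symm ny6.symm n46.symm hq_6.symm nb6c2.symm he6.symm nz6.symm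
          ni6ub.symm he6.symm n56.symm np3.symm nd3.symm hy_3.symm nq3.symm nb3c2.symm n35 ne3.symm
          hz_3.symm ni3ub.symm n35 hpq np5 nep.symm nzp.symm nipub.symm nep.symm np5 ndq nbdc2.symm
          hd_5 nzd.symm nidub.symm ned.symm hd_5 nyq nbyc2.symm ny5 nye hyz nye ny5 nq4.symm
          nb4c2.symm n45 ne4.symm nz4.symm ni4ub.symm ne4.symm
    by_cases hr3 : ¬G.Adj c3 e ∧ ¬G.Adj c3 e ∧ ¬G.Adj c3 ub
    · have nb2c3 : c3 ≠ x2 := by intro hh; subst hh; exact no3 h6 hAc3 a12.symm hp1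
      have nb3c3 : c3 ≠ x3 := by intro hh; subst hh; exact no4 h6 hAc3 a23.symm a12.symm hp1 hp_2 n13.symm
      have nb4c3 : c3 ≠ x4 := by intro hh; subst hh; exact spx4 hAc3
      have nb6c3 : c3 ≠ x6 := by intro hh; subst hh; exact no3 h6 hAc3 a61 hp1
      have nbdc3 : c3 ≠ d := by intro hh; subst hh; exact spd hAc3
      have nbyc3 : c3 ≠ y := by intro hh; subst hh; exact spy hAc3
      have nbzc3 : c3 ≠ z := by intro hh; subst hh; exact spz hAc3
      have sb5c3 : ¬ G.Adj c3 x5 := fun hh => no5 h6 hh a56 a61 hp1 hAc3 nb6c3 hc3_1 n15.symm np5.symm hp_6.symm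
      have sA1bc3 : ¬ G.Adj q c3 := fun hh => no4 h6 hh hAc3.symm hp1.symm hq1 hpq.symm hc3_1
      have sybc3 : ¬ G.Adj y c3 := fun hh => no5 h6 hh hAc3.symm hp1.symm a12 hy2 nyp hy_1 hc3_1 nb2c3 hp_2
      have szbc3 : ¬ G.Adj z c3 := fun hh => no5 h6 hh hAc3.symm hp1.symm a12 hz2 nzp hz_1 hc3_1 nb2c3 hp_2
      exact build G hreg x1 x2 x6 x3 p d y x4 q c3 x5 e z ub e x5
          hq1 hp1 a61.symm a12 hAc3 a56.symm hd6 hde hz2 hy2 a23 hyub hx3e a34 a45 sA1bc3 sq5 sqe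
          sqz sA1iub sqe sq5 sb5c3 hr3.2.1 (fun hsymm => szbc3 hsymm.symm) hr3.2.2 hr3.2.1 sb5c3 s5e
          (fun hsymm => sz5 hsymm.symm) (fun hsymm => hub_5 hsymm.symm) s5e (G.loopless.irrefl x5)
          (fun hsymm => hze hsymm.symm) (fun hsymm => sijub hsymm.symm) (G.loopless.irrefl e)
          (fun hsymm => s5e hsymm.symm) sfiub hze sz5 sijub hub_5 (fun hsymm => s5e hsymm.symm) spd
          spy spx4 sdy sdx4 syx4 s63 n13 hd_1.symm hy_1.symm n14 hc3_1.symm n15 ne1.symm hz_1.symm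
          ni1ub.symm ne1.symm n15 n26 hp_2.symm nd2.symm n24 hq_2.symm nb2c3.symm n25 ne2.symm
          hub2.symm ne2.symm n25 hp_6.symm ny6.symm n46.symm hq_6.symm nb6c3.symm he6.symm nz6.symm
          ni6ub.symm he6.symm n56.symm np3.symm nd3.symm hy_3.symm nq3.symm nb3c3.symm n35 ne3.symm
          hz_3.symm ni3ub.symm n35 hpq np5 nep.symm nzp.symm nipub.symm nep.symm np5 ndq nbdc3.symm
          hd_5 nzd.symm nidub.symm ned.symm hd_5 nyq nbyc3.symm ny5 nye hyz nye ny5 nq4.symm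
          nb4c3.symm n45 ne4.symm nz4.symm ni4ub.symm ne4.symm
    obtain ⟨w1, w2, w3, hw12, hw13, hw23, hQw1, hQw2, hQw3, hw1_1, hw2_1, hw3_1⟩ :=
      three_of G (hdeg q) hq1.symm
    by_cases hs1 : ¬G.Adj w1 e ∧ ¬G.Adj w1 e ∧ ¬G.Adj w1 ub
    · have nb2w1 : w1 ≠ x2 := by intro hh; subst hh; exact no3 h6 hQw1 a12.symm hq1
      have nb3w1 : w1 ≠ x3 := by intro hh; subst hh; exact no4 h6 hQw1 a23.symm a12.symm hq1 hq_2 n13.symm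
      have nb4w1 : w1 ≠ x4 := by intro hh; subst hh; exact sqx4 hQw1
      have nb6w1 : w1 ≠ x6 := by intro hh; subst hh; exact no3 h6 hQw1 a61 hq1
      have nbdw1 : w1 ≠ d := by intro hh; subst hh; exact sqd hQw1
      have nbyw1 : w1 ≠ y := by intro hh; subst hh; exact sqy hQw1
      have nbzw1 : w1 ≠ z := by intro hh; subst hh; exact sqz hQw1
      have sb5w1 : ¬ G.Adj w1 x5 := fun hh => no5 h6 hh a56 a61 hq1 hQw1 nb6w1 hw1_1 n15.symm nq5.symm hq_6.symm
      have sA1bw1 : ¬ G.Adj p w1 := fun hh => no4 h6 hh hQw1.symm hq1.symm hp1 hpq hw1_1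
      have sybw1 : ¬ G.Adj y w1 := fun hh => no5 h6 hh hQw1.symm hq1.symm a12 hy2 nyq hy_1 hw1_1 nb2w1 hq_2
      have szbw1 : ¬ G.Adj z w1 := fun hh => no5 h6 hh hQw1.symm hq1.symm a12 hz2 nzq hz_1 hw1_1 nb2w1 hq_2
      exact build G hreg x1 x2 x6 x3 q d y x4 p w1 x5 e z ub e x5
          hp1 hq1 a61.symm a12 hQw1 a56.symm hd6 hde hz2 hy2 a23 hyub hx3e a34 a45 sA1bw1 sp5 spe
          spz sPub spe sp5 sb5w1 hs1.2.1 (fun hsymm => szbw1 hsymm.symm) hs1.2.2 hs1.2.1 sb5w1 s5e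
          (fun hsymm => sz5 hsymm.symm) (fun hsymm => hub_5 hsymm.symm) s5e (G.loopless.irrefl x5)
          (fun hsymm => hze hsymm.symm) (fun hsymm => sijub hsymm.symm) (G.loopless.irrefl e)
          (fun hsymm => s5e hsymm.symm) sfiub hze sz5 sijub hub_5 (fun hsymm => s5e hsymm.symm) sqd
          sqy sqx4 sdy sdx4 syx4 s63 n13 hd_1.symm hy_1.symm n14 hw1_1.symm n15 ne1.symm hz_1.symm
          ni1ub.symm ne1.symm n15 n26 hq_2.symm nd2.symm n24 hp_2.symm nb2w1.symm n25 ne2.symm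
          hub2.symm ne2.symm n25 hq_6.symm ny6.symm n46.symm hp_6.symm nb6w1.symm he6.symm nz6.symm
          ni6ub.symm he6.symm n56.symm nq3.symm nd3.symm hy_3.symm np3.symm nb3w1.symm n35 ne3.symm
          hz_3.symm ni3ub.symm n35 hpq.symm nq5 neq.symm nzq.symm niqub.symm neq.symm nq5 ndp
          nbdw1.symm hd_5 nzd.symm nidub.symm ned.symm hd_5 nyp nbyw1.symm ny5 nye hyz nye ny5
          np4.symm nb4w1.symm n45 ne4.symm nz4.symm ni4ub.symm ne4.symm
    by_cases hs2 : ¬G.Adj w2 e ∧ ¬G.Adj w2 e ∧ ¬G.Adj w2 ub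
    · have nb2w2 : w2 ≠ x2 := by intro hh; subst hh; exact no3 h6 hQw2 a12.symm hq1
      have nb3w2 : w2 ≠ x3 := by intro hh; subst hh; exact no4 h6 hQw2 a23.symm a12.symm hq1 hq_2 n13.symm
      have nb4w2 : w2 ≠ x4 := by intro hh; subst hh; exact sqx4 hQw2
      have nb6w2 : w2 ≠ x6 := by intro hh; subst hh; exact no3 h6 hQw2 a61 hq1
      have nbdw2 : w2 ≠ d := by intro hh; subst hh; exact sqd hQw2
      have nbyw2 : w2 ≠ y := by intro hh; subst hh; exact sqy hQw2
      have nbzw2 : w2 ≠ z := by intro hh; subst hh; exact sqz hQw2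
      have sb5w2 : ¬ G.Adj w2 x5 := fun hh => no5 h6 hh a56 a61 hq1 hQw2 nb6w2 hw2_1 n15.symm nq5.symm hq_6.symm
      have sA1bw2 : ¬ G.Adj p w2 := fun hh => no4 h6 hh hQw2.symm hq1.symm hp1 hpq hw2_1
      have sybw2 : ¬ G.Adj y w2 := fun hh => no5 h6 hh hQw2.symm hq1.symm a12 hy2 nyq hy_1 hw2_1 nb2w2 hq_2
      have szbw2 : ¬ G.Adj z w2 := fun hh => no5 h6 hh hQw2.symm hq1.symm a12 hz2 nzq hz_1 hw2_1 nb2w2 hq_2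
      exact build G hreg x1 x2 x6 x3 q d y x4 p w2 x5 e z ub e x5
          hp1 hq1 a61.symm a12 hQw2 a56.symm hd6 hde hz2 hy2 a23 hyub hx3e a34 a45 sA1bw2 sp5 spe
          spz sPub spe sp5 sb5w2 hs2.2.1 (fun hsymm => szbw2 hsymm.symm) hs2.2.2 hs2.2.1 sb5w2 s5e
          (fun hsymm => sz5 hsymm.symm) (fun hsymm => hub_5 hsymm.symm) s5e (G.loopless.irrefl x5)
          (fun hsymm => hze hsymm.symm) (fun hsymm => sijub hsymm.symm) (G.loopless.irrefl e)
          (fun hsymm => s5e hsymm.symm) sfiub hze sz5 sijub hub_5 (fun hsymm => s5e hsymm.symm) sqd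
          sqy sqx4 sdy sdx4 syx4 s63 n13 hd_1.symm hy_1.symm n14 hw2_1.symm n15 ne1.symm hz_1.symm
          ni1ub.symm ne1.symm n15 n26 hq_2.symm nd2.symm n24 hp_2.symm nb2w2.symm n25 ne2.symm
          hub2.symm ne2.symm n25 hq_6.symm ny6.symm n46.symm hp_6.symm nb6w2.symm he6.symm nz6.symm
          ni6ub.symm he6.symm n56.symm nq3.symm nd3.symm hy_3.symm np3.symm nb3w2.symm n35 ne3.symm
          hz_3.symm ni3ub.symm n35 hpq.symm nq5 neq.symm nzq.symm niqub.symm neq.symm nq5 ndp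
          nbdw2.symm hd_5 nzd.symm nidub.symm ned.symm hd_5 nyp nbyw2.symm ny5 nye hyz nye ny5
          np4.symm nb4w2.symm n45 ne4.symm nz4.symm ni4ub.symm ne4.symm
    by_cases hs3 : ¬G.Adj w3 e ∧ ¬G.Adj w3 e ∧ ¬G.Adj w3 ub
    · have nb2w3 : w3 ≠ x2 := by intro hh; subst hh; exact no3 h6 hQw3 a12.symm hq1
      have nb3w3 : w3 ≠ x3 := by intro hh; subst hh; exact no4 h6 hQw3 a23.symm a12.symm hq1 hq_2 n13.symm
      have nb4w3 : w3 ≠ x4 := by intro hh; subst hh; exact sqx4 hQw3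
      have nb6w3 : w3 ≠ x6 := by intro hh; subst hh; exact no3 h6 hQw3 a61 hq1
      have nbdw3 : w3 ≠ d := by intro hh; subst hh; exact sqd hQw3
      have nbyw3 : w3 ≠ y := by intro hh; subst hh; exact sqy hQw3
      have nbzw3 : w3 ≠ z := by intro hh; subst hh; exact sqz hQw3
      have sb5w3 : ¬ G.Adj w3 x5 := fun hh => no5 h6 hh a56 a61 hq1 hQw3 nb6w3 hw3_1 n15.symm nq5.symm hq_6.symm
      have sA1bw3 : ¬ G.Adj p w3 := fun hh => no4 h6 hh hQw3.symm hq1.symm hp1 hpq hw3_1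
      have sybw3 : ¬ G.Adj y w3 := fun hh => no5 h6 hh hQw3.symm hq1.symm a12 hy2 nyq hy_1 hw3_1 nb2w3 hq_2
      have szbw3 : ¬ G.Adj z w3 := fun hh => no5 h6 hh hQw3.symm hq1.symm a12 hz2 nzq hz_1 hw3_1 nb2w3 hq_2
      exact build G hreg x1 x2 x6 x3 q d y x4 p w3 x5 e z ub e x5
          hp1 hq1 a61.symm a12 hQw3 a56.symm hd6 hde hz2 hy2 a23 hyub hx3e a34 a45 sA1bw3 sp5 spe
          spz sPub spe sp5 sb5w3 hs3.2.1 (fun hsymm => szbw3 hsymm.symm) hs3.2.2 hs3.2.1 sb5w3 s5e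
          (fun hsymm => sz5 hsymm.symm) (fun hsymm => hub_5 hsymm.symm) s5e (G.loopless.irrefl x5)
          (fun hsymm => hze hsymm.symm) (fun hsymm => sijub hsymm.symm) (G.loopless.irrefl e)
          (fun hsymm => s5e hsymm.symm) sfiub hze sz5 sijub hub_5 (fun hsymm => s5e hsymm.symm) sqd
          sqy sqx4 sdy sdx4 syx4 s63 n13 hd_1.symm hy_1.symm n14 hw3_1.symm n15 ne1.symm hz_1.symm
          ni1ub.symm ne1.symm n15 n26 hq_2.symm nd2.symm n24 hp_2.symm nb2w3.symm n25 ne2.symm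
          hub2.symm ne2.symm n25 hq_6.symm ny6.symm n46.symm hp_6.symm nb6w3.symm he6.symm nz6.symm
          ni6ub.symm he6.symm n56.symm nq3.symm nd3.symm hy_3.symm np3.symm nb3w3.symm n35 ne3.symm
          hz_3.symm ni3ub.symm n35 hpq.symm nq5 neq.symm nzq.symm niqub.symm neq.symm nq5 ndp
          nbdw3.symm hd_5 nzd.symm nidub.symm ned.symm hd_5 nyp nbyw3.symm ny5 nye hyz nye ny5
          np4.symm nb4w3.symm n45 ne4.symm nz4.symm ni4ub.symm ne4.symm
    have br1 : G.Adj c1 e ∨ G.Adj c1 e ∨ G.Adj c1 ub := by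
      by_contra hc; push_neg at hc; exact hr1 ⟨hc.2.1, hc.1, hc.2.2⟩
    have br2 : G.Adj c2 e ∨ G.Adj c2 e ∨ G.Adj c2 ub := by
      by_contra hc; push_neg at hc; exact hr2 ⟨hc.2.1, hc.1, hc.2.2⟩
    have br3 : G.Adj c3 e ∨ G.Adj c3 e ∨ G.Adj c3 ub := by
      by_contra hc; push_neg at hc; exact hr3 ⟨hc.2.1, hc.1, hc.2.2⟩
    have bs1 : G.Adj w1 e ∨ G.Adj w1 e ∨ G.Adj w1 ub := by
      by_contra hc; push_neg at hc; exact hs1 ⟨hc.2.1, hc.1, hc.2.2⟩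
    have bs2 : G.Adj w2 e ∨ G.Adj w2 e ∨ G.Adj w2 ub := by
      by_contra hc; push_neg at hc; exact hs2 ⟨hc.2.1, hc.1, hc.2.2⟩
    have bs3 : G.Adj w3 e ∨ G.Adj w3 e ∨ G.Adj w3 ub := by
      by_contra hc; push_neg at hc; exact hs3 ⟨hc.2.1, hc.1, hc.2.2⟩
    obtain ⟨ce, cr, hcem, hcrm, hce_e, hcr_u, hcr_j, hcr_e⟩ :=
      extract3 (P := fun w => G.Adj w e) (Q := fun w => G.Adj w e) (R := fun w => G.Adj w ub)
        (a := c1) (b := c2) (c := c3)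
        (fun ha1 ha2 => no4 h6 ha1 ha2.symm hAc2.symm hAc1 hc12 nep)
        (fun ha1 ha2 => no4 h6 ha1 ha2.symm hAc3.symm hAc1 hc13 nep)
        (fun ha1 ha2 => no4 h6 ha1 ha2.symm hAc3.symm hAc2 hc23 nep)
        (fun ha1 ha2 => no4 h6 ha1 ha2.symm hAc2.symm hAc1 hc12 nep)
        (fun ha1 ha2 => no4 h6 ha1 ha2.symm hAc3.symm hAc1 hc13 nep)
        (fun ha1 ha2 => no4 h6 ha1 ha2.symm hAc3.symm hAc2 hc23 nep)
        (fun ha1 ha2 => no4 h6 ha1 ha2.symm hAc2.symm hAc1 hc12 nipub)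
        (fun ha1 ha2 => no4 h6 ha1 ha2.symm hAc3.symm hAc1 hc13 nipub)
        (fun ha1 ha2 => no4 h6 ha1 ha2.symm hAc3.symm hAc2 hc23 nipub)
        br1 br2 br3
    obtain ⟨cf, cg, hcfm, hcgm, hcf_e, hcg_u, hcg_j, hcg_e⟩ :=
      extract3 (P := fun w => G.Adj w e) (Q := fun w => G.Adj w e) (R := fun w => G.Adj w ub)
        (a := w1) (b := w2) (c := w3)
        (fun ha1 ha2 => no4 h6 ha1 ha2.symm hQw2.symm hQw1 hw12 neq)
        (fun ha1 ha2 => no4 h6 ha1 ha2.symm hQw3.symm hQw1 hw13 neq)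
        (fun ha1 ha2 => no4 h6 ha1 ha2.symm hQw3.symm hQw2 hw23 neq)
        (fun ha1 ha2 => no4 h6 ha1 ha2.symm hQw2.symm hQw1 hw12 neq)
        (fun ha1 ha2 => no4 h6 ha1 ha2.symm hQw3.symm hQw1 hw13 neq)
        (fun ha1 ha2 => no4 h6 ha1 ha2.symm hQw3.symm hQw2 hw23 neq)
        (fun ha1 ha2 => no4 h6 ha1 ha2.symm hQw2.symm hQw1 hw12 niqub)
        (fun ha1 ha2 => no4 h6 ha1 ha2.symm hQw3.symm hQw1 hw13 niqub)
        (fun ha1 ha2 => no4 h6 ha1 ha2.symm hQw3.symm hQw2 hw23 niqub)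
        bs1 bs2 bs3
    have hpce : G.Adj p ce := by rcases hcem with rfl|rfl|rfl <;> assumption
    have hce1 : ce ≠ x1 := by rcases hcem with rfl|rfl|rfl <;> assumption
    have hqcf : G.Adj q cf := by rcases hcfm with rfl|rfl|rfl <;> assumption
    have hcf1 : cf ≠ x1 := by rcases hcfm with rfl|rfl|rfl <;> assumption
    have k1 : d ≠ ue := by intro hh; subst hh; exact sdy hyue.symm
    have k2 : d ≠ ve := by intro hh; subst hh; exact sdz hzve.symm
    have k3 : d ≠ ce := by intro hh; subst hh; exact spd hpce
    have k4 : d ≠ cf := by intro hh; subst hh; exact sqd hqcf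
    have k5 : ue ≠ ve := by intro hh; subst hh; exact no4 h6 hyue.symm hy2.symm hz2 hzve hue2 hyz
    have k6 : ue ≠ ce := by intro hh; subst hh; exact no5 h6 hyue.symm hy2.symm a12.symm hp1 hpce hue2 nue1 hy_1 nyp hp_2.symm
    have k7 : ue ≠ cf := by intro hh; subst hh; exact no5 h6 hyue.symm hy2.symm a12.symm hq1 hqcf hue2 nue1 hy_1 nyq hq_2.symm
    have k8 : ve ≠ ce := by intro hh; subst hh; exact no5 h6 hzve.symm hz2.symm a12.symm hp1 hpce hve2 nve1 hz_1 nzp hp_2.symm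
    have k9 : ve ≠ cf := by intro hh; subst hh; exact no5 h6 hzve.symm hz2.symm a12.symm hq1 hqcf hve2 nve1 hz_1 nzq hq_2.symm
    have k10 : ce ≠ cf := by intro hh; subst hh; exact no4 h6 hpce.symm hp1.symm hq1 hqcf hce1 hpq
    exact (five_nbrs G (hdeg e) hde.symm hue_e.symm hve_e.symm hce_e.symm hcf_e.symm k1 k2 k3 k4 k5 k6 k7 k8 k9 k10).elim
  obtain ⟨t1, t2, ht12, ht1, ht2, ht1_2, ht1_4, ht2_2, ht2_4⟩ :=
    two_of G (hdeg x3) a23.symm a34 n24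
  obtain ⟨j, hjmem, hj_e⟩ := pick2 (P := fun w => G.Adj w e) (a := t1) (b := t2)
    (fun h1 h2 => no4 h6 h1 h2.symm ht2.symm ht1 ht12 ne3)
  have hj3 : G.Adj x3 j := by rcases hjmem with rfl|rfl <;> assumption
  have hj_2 : j ≠ x2 := by rcases hjmem with rfl|rfl <;> assumption
  have hj_4 : j ≠ x4 := by rcases hjmem with rfl|rfl <;> assumption
  have nj1 : j ≠ x1 := by intro hh; subst hh; exact ch13 hj3.symm
  have nj6 : j ≠ x6 := by intro hh; subst hh; exact ch36 hj3
  have njp : j ≠ p := by intro hh; subst hh; exact no4 h6 hp1.symm a12 a23 hj3 hp_2 n13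
  have njq : j ≠ q := by intro hh; subst hh; exact no4 h6 hq1.symm a12 a23 hj3 hq_2 n13
  have njd : j ≠ d := by
    intro hh; subst hh
    exact no5 h6 a23.symm a12.symm a61.symm hd6 hj3.symm n13.symm n36 n26 nd2.symm hd_1.symm
  have njy : j ≠ y := by intro hh; subst hh; exact no3 h6 a23 hj3 hy2.symm
  have njz : j ≠ z := by intro hh; subst hh; exact no3 h6 a23 hj3 hz2.symm
  have sj5 : ¬ G.Adj j x5 := fun hh => no4 h6 hj3 hh a45.symm a34.symm n35 hj_4
  have sjq : ¬ G.Adj q j := fun hh => no5 h6 hh hj3.symm a23.symm a12.symm hq1 nq3 hq_2 hj_2 nj1 n13.symm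
  have sjp : ¬ G.Adj p j := fun hh => no5 h6 hh hj3.symm a23.symm a12.symm hp1 np3 hp_2 hj_2 nj1 n13.symm
  have syj : ¬ G.Adj y j := fun hh => no4 h6 hy2 hh hj3.symm a23.symm hj_2.symm hy_3
  have szj : ¬ G.Adj z j := fun hh => no4 h6 hz2 hh hj3.symm a23.symm hj_2.symm hz_3
  by_cases hye : G.Adj y e
  · have szce : ¬ G.Adj z e := fun hh => no4 h6 hye hh.symm hz2.symm hy2 hyz ne2
    obtain ⟨c1, c2, c3, hc12, hc13, hc23, hAc1, hAc2, hAc3, hc1_1, hc2_1, hc3_1⟩ :=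
      three_of G (hdeg p) hp1.symm
    obtain ⟨b, hbmem, hb_e, hb_j⟩ := pick3 (P := fun w => G.Adj w e) (Q := fun w => G.Adj w j)
      (a := c1) (b := c2) (c := c3)
      (fun h1 h2 => no4 h6 h1 h2.symm hAc2.symm hAc1 hc12 nep)
      (fun h1 h2 => no4 h6 h1 h2.symm hAc3.symm hAc1 hc13 nep)
      (fun h1 h2 => no4 h6 h1 h2.symm hAc3.symm hAc2 hc23 nep)
      (fun h1 h2 => no4 h6 h1 h2.symm hAc2.symm hAc1 hc12 njp)
      (fun h1 h2 => no4 h6 h1 h2.symm hAc3.symm hAc1 hc13 njp)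
      (fun h1 h2 => no4 h6 h1 h2.symm hAc3.symm hAc2 hc23 njp)
    have hbp : G.Adj p b := by rcases hbmem with rfl|rfl|rfl <;> assumption
    have hb_1 : b ≠ x1 := by rcases hbmem with rfl|rfl|rfl <;> assumption
    have nb2b : b ≠ x2 := by intro hh; subst hh; exact no3 h6 hbp a12.symm hp1
    have nb3b : b ≠ x3 := by intro hh; subst hh; exact no4 h6 hbp a23.symm a12.symm hp1 hp_2 n13.symm
    have nb4b : b ≠ x4 := by intro hh; subst hh; exact spx4 hbp
    have nb6b : b ≠ x6 := by intro hh; subst hh; exact no3 h6 hbp a61 hp1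
    have nbdb : b ≠ d := by intro hh; subst hh; exact spd hbp
    have nbyb : b ≠ y := by intro hh; subst hh; exact spy hbp
    have nbzb : b ≠ z := by intro hh; subst hh; exact spz hbp
    have sb5b : ¬ G.Adj b x5 := fun hh => no5 h6 hh a56 a61 hp1 hbp nb6b hb_1 n15.symm np5.symm hp_6.symm
    have sA1bb : ¬ G.Adj q b := fun hh => no4 h6 hh hbp.symm hp1.symm hq1 hpq.symm hb_1
    have sybb : ¬ G.Adj y b := fun hh => no5 h6 hh hbp.symm hp1.symm a12 hy2 nyp hy_1 hb_1 nb2b hp_2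
    have szbb : ¬ G.Adj z b := fun hh => no5 h6 hh hbp.symm hp1.symm a12 hz2 nzp hz_1 hb_1 nb2b hp_2
    exact build G hreg x1 x2 x6 x3 p d y x4 q b x5 e z e j x5
        hq1 hp1 a61.symm a12 hbp a56.symm hd6 hde hz2 hy2 a23 hye hj3 a34 a45 sA1bb sq5 sqe sqz
        sqe sjq sq5 sb5b hb_e (fun hsymm => szbb hsymm.symm) hb_e hb_j sb5b s5e
        (fun hsymm => sz5 hsymm.symm) s5e (fun hsymm => sj5 hsymm.symm) (G.loopless.irrefl x5)
        (fun hsymm => szce hsymm.symm) (G.loopless.irrefl e) (fun hsymm => hj_e hsymm.symm)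
        (fun hsymm => s5e hsymm.symm) szce szj sz5 (fun hsymm => hj_e hsymm.symm)
        (fun hsymm => s5e hsymm.symm) sj5 spd spy spx4 sdy sdx4 syx4 s63 n13 hd_1.symm hy_1.symm
        n14 hb_1.symm n15 ne1.symm hz_1.symm ne1.symm nj1.symm n15 n26 hp_2.symm nd2.symm n24
        hq_2.symm nb2b.symm n25 ne2.symm ne2.symm hj_2.symm n25 hp_6.symm ny6.symm n46.symm
        hq_6.symm nb6b.symm he6.symm nz6.symm he6.symm nj6.symm n56.symm np3.symm nd3.symm
        hy_3.symm nq3.symm nb3b.symm n35 ne3.symm hz_3.symm ne3.symm n35 hpq np5 nep.symm nzp.symm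
        nep.symm njp.symm np5 ndq nbdb.symm hd_5 nzd.symm ned.symm njd.symm hd_5 nyq nbyb.symm ny5
        nye hyz njy.symm ny5 nq4.symm nb4b.symm n45 ne4.symm nz4.symm ne4.symm hj_4.symm
  by_cases hze : G.Adj z e
  · obtain ⟨c1, c2, c3, hc12, hc13, hc23, hAc1, hAc2, hAc3, hc1_1, hc2_1, hc3_1⟩ :=
      three_of G (hdeg p) hp1.symm
    obtain ⟨b, hbmem, hb_e, hb_j⟩ := pick3 (P := fun w => G.Adj w e) (Q := fun w => G.Adj w j)
      (a := c1) (b := c2) (c := c3)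
      (fun h1 h2 => no4 h6 h1 h2.symm hAc2.symm hAc1 hc12 nep)
      (fun h1 h2 => no4 h6 h1 h2.symm hAc3.symm hAc1 hc13 nep)
      (fun h1 h2 => no4 h6 h1 h2.symm hAc3.symm hAc2 hc23 nep)
      (fun h1 h2 => no4 h6 h1 h2.symm hAc2.symm hAc1 hc12 njp)
      (fun h1 h2 => no4 h6 h1 h2.symm hAc3.symm hAc1 hc13 njp)
      (fun h1 h2 => no4 h6 h1 h2.symm hAc3.symm hAc2 hc23 njp)
    have hbp : G.Adj p b := by rcases hbmem with rfl|rfl|rfl <;> assumption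
    have hb_1 : b ≠ x1 := by rcases hbmem with rfl|rfl|rfl <;> assumption
    have nb2b : b ≠ x2 := by intro hh; subst hh; exact no3 h6 hbp a12.symm hp1
    have nb3b : b ≠ x3 := by intro hh; subst hh; exact no4 h6 hbp a23.symm a12.symm hp1 hp_2 n13.symm
    have nb4b : b ≠ x4 := by intro hh; subst hh; exact spx4 hbp
    have nb6b : b ≠ x6 := by intro hh; subst hh; exact no3 h6 hbp a61 hp1
    have nbdb : b ≠ d := by intro hh; subst hh; exact spd hbp
    have nbyb : b ≠ y := by intro hh; subst hh; exact spy hbp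
    have nbzb : b ≠ z := by intro hh; subst hh; exact spz hbp
    have sb5b : ¬ G.Adj b x5 := fun hh => no5 h6 hh a56 a61 hp1 hbp nb6b hb_1 n15.symm np5.symm hp_6.symm
    have sA1bb : ¬ G.Adj q b := fun hh => no4 h6 hh hbp.symm hp1.symm hq1 hpq.symm hb_1
    have sybb : ¬ G.Adj y b := fun hh => no5 h6 hh hbp.symm hp1.symm a12 hy2 nyp hy_1 hb_1 nb2b hp_2
    have szbb : ¬ G.Adj z b := fun hh => no5 h6 hh hbp.symm hp1.symm a12 hz2 nzp hz_1 hb_1 nb2b hp_2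
    exact build G hreg x1 x2 x6 x3 p d z x4 q b x5 e y e j x5
        hq1 hp1 a61.symm a12 hbp a56.symm hd6 hde hy2 hz2 a23 hze hj3 a34 a45 sA1bb sq5 sqe sqy
        sqe sjq sq5 sb5b hb_e (fun hsymm => sybb hsymm.symm) hb_e hb_j sb5b s5e
        (fun hsymm => sy5 hsymm.symm) s5e (fun hsymm => sj5 hsymm.symm) (G.loopless.irrefl x5)
        (fun hsymm => hye hsymm.symm) (G.loopless.irrefl e) (fun hsymm => hj_e hsymm.symm)
        (fun hsymm => s5e hsymm.symm) hye syj sy5 (fun hsymm => hj_e hsymm.symm)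
        (fun hsymm => s5e hsymm.symm) sj5 spd spz spx4 sdz sdx4 szx4 s63 n13 hd_1.symm hz_1.symm
        n14 hb_1.symm n15 ne1.symm hy_1.symm ne1.symm nj1.symm n15 n26 hp_2.symm nd2.symm n24
        hq_2.symm nb2b.symm n25 ne2.symm ne2.symm hj_2.symm n25 hp_6.symm nz6.symm n46.symm
        hq_6.symm nb6b.symm he6.symm ny6.symm he6.symm nj6.symm n56.symm np3.symm nd3.symm
        hz_3.symm nq3.symm nb3b.symm n35 ne3.symm hy_3.symm ne3.symm n35 hpq np5 nep.symm nyp.symm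
        nep.symm njp.symm np5 ndq nbdb.symm hd_5 nyd.symm ned.symm njd.symm hd_5 nzq nbzb.symm nz5
        nze hyz.symm njz.symm nz5 nq4.symm nb4b.symm n45 ne4.symm ny4.symm ne4.symm hj_4.symm
  obtain ⟨c1, c2, c3, hc12, hc13, hc23, hAc1, hAc2, hAc3, hc1_1, hc2_1, hc3_1⟩ :=
    three_of G (hdeg p) hp1.symm
  obtain ⟨b, hbmem, hb_e, hb_j⟩ := pick3 (P := fun w => G.Adj w e) (Q := fun w => G.Adj w j)
    (a := c1) (b := c2) (c := c3)
    (fun h1 h2 => no4 h6 h1 h2.symm hAc2.symm hAc1 hc12 nep)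
    (fun h1 h2 => no4 h6 h1 h2.symm hAc3.symm hAc1 hc13 nep)
    (fun h1 h2 => no4 h6 h1 h2.symm hAc3.symm hAc2 hc23 nep)
    (fun h1 h2 => no4 h6 h1 h2.symm hAc2.symm hAc1 hc12 njp)
    (fun h1 h2 => no4 h6 h1 h2.symm hAc3.symm hAc1 hc13 njp)
    (fun h1 h2 => no4 h6 h1 h2.symm hAc3.symm hAc2 hc23 njp)
  have hbp : G.Adj p b := by rcases hbmem with rfl|rfl|rfl <;> assumption
  have hb_1 : b ≠ x1 := by rcases hbmem with rfl|rfl|rfl <;> assumption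
  have nb2b : b ≠ x2 := by intro hh; subst hh; exact no3 h6 hbp a12.symm hp1
  have nb3b : b ≠ x3 := by intro hh; subst hh; exact no4 h6 hbp a23.symm a12.symm hp1 hp_2 n13.symm
  have nb4b : b ≠ x4 := by intro hh; subst hh; exact spx4 hbp
  have nb6b : b ≠ x6 := by intro hh; subst hh; exact no3 h6 hbp a61 hp1
  have nbdb : b ≠ d := by intro hh; subst hh; exact spd hbp
  have nbyb : b ≠ y := by intro hh; subst hh; exact spy hbp
  have nbzb : b ≠ z := by intro hh; subst hh; exact spz hbp
  have sb5b : ¬ G.Adj b x5 := fun hh => no5 h6 hh a56 a61 hp1 hbp nb6b hb_1 n15.symm np5.symm hp_6.symm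
  have sA1bb : ¬ G.Adj q b := fun hh => no4 h6 hh hbp.symm hp1.symm hq1 hpq.symm hb_1
  have sybb : ¬ G.Adj y b := fun hh => no5 h6 hh hbp.symm hp1.symm a12 hy2 nyp hy_1 hb_1 nb2b hp_2
  have szbb : ¬ G.Adj z b := fun hh => no5 h6 hh hbp.symm hp1.symm a12 hz2 nzp hz_1 hb_1 nb2b hp_2
  obtain ⟨u1, u2, u3, hu12, hu13, hu23, hyu1, hyu2, hyu3, hu1_2, hu2_2, hu3_2⟩ :=
    three_of G (hdeg y) hy2.symm
  by_cases hg1 : ¬G.Adj u1 x5 ∧ ¬G.Adj u1 e ∧ ¬G.Adj u1 b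
  · have ni1u1 : u1 ≠ x1 := by intro hh; subst hh; exact no3 h6 a12 hy2 hyu1
    have ni3u1 : u1 ≠ x3 := by intro hh; subst hh; exact no3 h6 hy2 hyu1 a23.symm
    have ni6u1 : u1 ≠ x6 := by intro hh; subst hh; exact no4 h6 a61 a12 hy2 hyu1 n26.symm hy_1.symm
    have nipu1 : u1 ≠ p := by intro hh; subst hh; exact spy hyu1.symm
    have niqu1 : u1 ≠ q := by intro hh; subst hh; exact sqy hyu1.symm
    have nidu1 : u1 ≠ d := by intro hh; subst hh; exact sdy hyu1.symm
    have ni4u1 : u1 ≠ x4 := by intro hh; subst hh; exact syx4 hyu1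
    have sA1iu1 : ¬ G.Adj q u1 := fun hh => no5 h6 hh hyu1.symm hy2.symm a12.symm hq1 nyq.symm hq_2 hu1_2 ni1u1 hy_1
    have sfiu1 : ¬ G.Adj z u1 := fun hh => no4 h6 hh hyu1.symm hy2.symm hz2 hyz.symm hu1_2
    have siju1 : ¬ G.Adj u1 j := fun hh => no5 h6 hyu1.symm hy2.symm a23 hj3 hh.symm hu1_2 ni3u1 hy_3 njy.symm hj_2.symm
    exact build G hreg x1 x2 x6 x3 p d y x4 q b x5 e z u1 j x5
        hq1 hp1 a61.symm a12 hbp a56.symm hd6 hde hz2 hy2 a23 hyu1 hj3 a34 a45 sA1bb sq5 sqe sqz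
        sA1iu1 sjq sq5 sb5b hb_e (fun hsymm => szbb hsymm.symm) (fun hsymm => hg1.2.2 hsymm.symm)
        hb_j sb5b s5e (fun hsymm => sz5 hsymm.symm) (fun hsymm => hg1.1 hsymm.symm)
        (fun hsymm => sj5 hsymm.symm) (G.loopless.irrefl x5) (fun hsymm => hze hsymm.symm)
        (fun hsymm => hg1.2.1 hsymm.symm) (fun hsymm => hj_e hsymm.symm)
        (fun hsymm => s5e hsymm.symm) sfiu1 szj sz5 siju1 hg1.1 sj5 spd spy spx4 sdy sdx4 syx4 s63
        n13 hd_1.symm hy_1.symm n14 hb_1.symm n15 ne1.symm hz_1.symm ni1u1.symm nj1.symm n15 n26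
        hp_2.symm nd2.symm n24 hq_2.symm nb2b.symm n25 ne2.symm hu1_2.symm hj_2.symm n25 hp_6.symm
        ny6.symm n46.symm hq_6.symm nb6b.symm he6.symm nz6.symm ni6u1.symm nj6.symm n56.symm
        np3.symm nd3.symm hy_3.symm nq3.symm nb3b.symm n35 ne3.symm hz_3.symm ni3u1.symm n35 hpq
        np5 nep.symm nzp.symm nipu1.symm njp.symm np5 ndq nbdb.symm hd_5 nzd.symm nidu1.symm
        njd.symm hd_5 nyq nbyb.symm ny5 nye hyz njy.symm ny5 nq4.symm nb4b.symm n45 ne4.symm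
        nz4.symm ni4u1.symm hj_4.symm
  by_cases hg2 : ¬G.Adj u2 x5 ∧ ¬G.Adj u2 e ∧ ¬G.Adj u2 b
  · have ni1u2 : u2 ≠ x1 := by intro hh; subst hh; exact no3 h6 a12 hy2 hyu2
    have ni3u2 : u2 ≠ x3 := by intro hh; subst hh; exact no3 h6 hy2 hyu2 a23.symm
    have ni6u2 : u2 ≠ x6 := by intro hh; subst hh; exact no4 h6 a61 a12 hy2 hyu2 n26.symm hy_1.symm
    have nipu2 : u2 ≠ p := by intro hh; subst hh; exact spy hyu2.symm
    have niqu2 : u2 ≠ q := by intro hh; subst hh; exact sqy hyu2.symm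
    have nidu2 : u2 ≠ d := by intro hh; subst hh; exact sdy hyu2.symm
    have ni4u2 : u2 ≠ x4 := by intro hh; subst hh; exact syx4 hyu2
    have sA1iu2 : ¬ G.Adj q u2 := fun hh => no5 h6 hh hyu2.symm hy2.symm a12.symm hq1 nyq.symm hq_2 hu2_2 ni1u2 hy_1
    have sfiu2 : ¬ G.Adj z u2 := fun hh => no4 h6 hh hyu2.symm hy2.symm hz2 hyz.symm hu2_2
    have siju2 : ¬ G.Adj u2 j := fun hh => no5 h6 hyu2.symm hy2.symm a23 hj3 hh.symm hu2_2 ni3u2 hy_3 njy.symm hj_2.symm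
    exact build G hreg x1 x2 x6 x3 p d y x4 q b x5 e z u2 j x5
        hq1 hp1 a61.symm a12 hbp a56.symm hd6 hde hz2 hy2 a23 hyu2 hj3 a34 a45 sA1bb sq5 sqe sqz
        sA1iu2 sjq sq5 sb5b hb_e (fun hsymm => szbb hsymm.symm) (fun hsymm => hg2.2.2 hsymm.symm)
        hb_j sb5b s5e (fun hsymm => sz5 hsymm.symm) (fun hsymm => hg2.1 hsymm.symm)
        (fun hsymm => sj5 hsymm.symm) (G.loopless.irrefl x5) (fun hsymm => hze hsymm.symm)
        (fun hsymm => hg2.2.1 hsymm.symm) (fun hsymm => hj_e hsymm.symm)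
        (fun hsymm => s5e hsymm.symm) sfiu2 szj sz5 siju2 hg2.1 sj5 spd spy spx4 sdy sdx4 syx4 s63
        n13 hd_1.symm hy_1.symm n14 hb_1.symm n15 ne1.symm hz_1.symm ni1u2.symm nj1.symm n15 n26
        hp_2.symm nd2.symm n24 hq_2.symm nb2b.symm n25 ne2.symm hu2_2.symm hj_2.symm n25 hp_6.symm
        ny6.symm n46.symm hq_6.symm nb6b.symm he6.symm nz6.symm ni6u2.symm nj6.symm n56.symm
        np3.symm nd3.symm hy_3.symm nq3.symm nb3b.symm n35 ne3.symm hz_3.symm ni3u2.symm n35 hpq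
        np5 nep.symm nzp.symm nipu2.symm njp.symm np5 ndq nbdb.symm hd_5 nzd.symm nidu2.symm
        njd.symm hd_5 nyq nbyb.symm ny5 nye hyz njy.symm ny5 nq4.symm nb4b.symm n45 ne4.symm
        nz4.symm ni4u2.symm hj_4.symm
  by_cases hg3 : ¬G.Adj u3 x5 ∧ ¬G.Adj u3 e ∧ ¬G.Adj u3 b
  · have ni1u3 : u3 ≠ x1 := by intro hh; subst hh; exact no3 h6 a12 hy2 hyu3
    have ni3u3 : u3 ≠ x3 := by intro hh; subst hh; exact no3 h6 hy2 hyu3 a23.symm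
    have ni6u3 : u3 ≠ x6 := by intro hh; subst hh; exact no4 h6 a61 a12 hy2 hyu3 n26.symm hy_1.symm
    have nipu3 : u3 ≠ p := by intro hh; subst hh; exact spy hyu3.symm
    have niqu3 : u3 ≠ q := by intro hh; subst hh; exact sqy hyu3.symm
    have nidu3 : u3 ≠ d := by intro hh; subst hh; exact sdy hyu3.symm
    have ni4u3 : u3 ≠ x4 := by intro hh; subst hh; exact syx4 hyu3
    have sA1iu3 : ¬ G.Adj q u3 := fun hh => no5 h6 hh hyu3.symm hy2.symm a12.symm hq1 nyq.symm hq_2 hu3_2 ni1u3 hy_1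
    have sfiu3 : ¬ G.Adj z u3 := fun hh => no4 h6 hh hyu3.symm hy2.symm hz2 hyz.symm hu3_2
    have siju3 : ¬ G.Adj u3 j := fun hh => no5 h6 hyu3.symm hy2.symm a23 hj3 hh.symm hu3_2 ni3u3 hy_3 njy.symm hj_2.symm
    exact build G hreg x1 x2 x6 x3 p d y x4 q b x5 e z u3 j x5
        hq1 hp1 a61.symm a12 hbp a56.symm hd6 hde hz2 hy2 a23 hyu3 hj3 a34 a45 sA1bb sq5 sqe sqz
        sA1iu3 sjq sq5 sb5b hb_e (fun hsymm => szbb hsymm.symm) (fun hsymm => hg3.2.2 hsymm.symm)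
        hb_j sb5b s5e (fun hsymm => sz5 hsymm.symm) (fun hsymm => hg3.1 hsymm.symm)
        (fun hsymm => sj5 hsymm.symm) (G.loopless.irrefl x5) (fun hsymm => hze hsymm.symm)
        (fun hsymm => hg3.2.1 hsymm.symm) (fun hsymm => hj_e hsymm.symm)
        (fun hsymm => s5e hsymm.symm) sfiu3 szj sz5 siju3 hg3.1 sj5 spd spy spx4 sdy sdx4 syx4 s63
        n13 hd_1.symm hy_1.symm n14 hb_1.symm n15 ne1.symm hz_1.symm ni1u3.symm nj1.symm n15 n26
        hp_2.symm nd2.symm n24 hq_2.symm nb2b.symm n25 ne2.symm hu3_2.symm hj_2.symm n25 hp_6.symm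
        ny6.symm n46.symm hq_6.symm nb6b.symm he6.symm nz6.symm ni6u3.symm nj6.symm n56.symm
        np3.symm nd3.symm hy_3.symm nq3.symm nb3b.symm n35 ne3.symm hz_3.symm ni3u3.symm n35 hpq
        np5 nep.symm nzp.symm nipu3.symm njp.symm np5 ndq nbdb.symm hd_5 nzd.symm nidu3.symm
        njd.symm hd_5 nyq nbyb.symm ny5 nye hyz njy.symm ny5 nq4.symm nb4b.symm n45 ne4.symm
        nz4.symm ni4u3.symm hj_4.symm
  obtain ⟨v1, v2, v3, hv12, hv13, hv23, hzv1, hzv2, hzv3, hv1_2, hv2_2, hv3_2⟩ :=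
    three_of G (hdeg z) hz2.symm
  by_cases hh1 : ¬G.Adj v1 x5 ∧ ¬G.Adj v1 e ∧ ¬G.Adj v1 b
  · have ni1v1 : v1 ≠ x1 := by intro hh; subst hh; exact no3 h6 a12 hz2 hzv1
    have ni3v1 : v1 ≠ x3 := by intro hh; subst hh; exact no3 h6 hz2 hzv1 a23.symm
    have ni6v1 : v1 ≠ x6 := by intro hh; subst hh; exact no4 h6 a61 a12 hz2 hzv1 n26.symm hz_1.symm
    have nipv1 : v1 ≠ p := by intro hh; subst hh; exact spz hzv1.symm
    have niqv1 : v1 ≠ q := by intro hh; subst hh; exact sqz hzv1.symm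
    have nidv1 : v1 ≠ d := by intro hh; subst hh; exact sdz hzv1.symm
    have ni4v1 : v1 ≠ x4 := by intro hh; subst hh; exact szx4 hzv1
    have sA1iv1 : ¬ G.Adj q v1 := fun hh => no5 h6 hh hzv1.symm hz2.symm a12.symm hq1 nzq.symm hq_2 hv1_2 ni1v1 hz_1
    have sfiv1 : ¬ G.Adj y v1 := fun hh => no4 h6 hh hzv1.symm hz2.symm hy2 hyz hv1_2
    have sijv1 : ¬ G.Adj v1 j := fun hh => no5 h6 hzv1.symm hz2.symm a23 hj3 hh.symm hv1_2 ni3v1 hz_3 njz.symm hj_2.symm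
    exact build G hreg x1 x2 x6 x3 p d z x4 q b x5 e y v1 j x5
        hq1 hp1 a61.symm a12 hbp a56.symm hd6 hde hy2 hz2 a23 hzv1 hj3 a34 a45 sA1bb sq5 sqe sqy
        sA1iv1 sjq sq5 sb5b hb_e (fun hsymm => sybb hsymm.symm) (fun hsymm => hh1.2.2 hsymm.symm)
        hb_j sb5b s5e (fun hsymm => sy5 hsymm.symm) (fun hsymm => hh1.1 hsymm.symm)
        (fun hsymm => sj5 hsymm.symm) (G.loopless.irrefl x5) (fun hsymm => hye hsymm.symm)
        (fun hsymm => hh1.2.1 hsymm.symm) (fun hsymm => hj_e hsymm.symm)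
        (fun hsymm => s5e hsymm.symm) sfiv1 syj sy5 sijv1 hh1.1 sj5 spd spz spx4 sdz sdx4 szx4 s63
        n13 hd_1.symm hz_1.symm n14 hb_1.symm n15 ne1.symm hy_1.symm ni1v1.symm nj1.symm n15 n26
        hp_2.symm nd2.symm n24 hq_2.symm nb2b.symm n25 ne2.symm hv1_2.symm hj_2.symm n25 hp_6.symm
        nz6.symm n46.symm hq_6.symm nb6b.symm he6.symm ny6.symm ni6v1.symm nj6.symm n56.symm
        np3.symm nd3.symm hz_3.symm nq3.symm nb3b.symm n35 ne3.symm hy_3.symm ni3v1.symm n35 hpq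
        np5 nep.symm nyp.symm nipv1.symm njp.symm np5 ndq nbdb.symm hd_5 nyd.symm nidv1.symm
        njd.symm hd_5 nzq nbzb.symm nz5 nze hyz.symm njz.symm nz5 nq4.symm nb4b.symm n45 ne4.symm
        ny4.symm ni4v1.symm hj_4.symm
  by_cases hh2 : ¬G.Adj v2 x5 ∧ ¬G.Adj v2 e ∧ ¬G.Adj v2 b
  · have ni1v2 : v2 ≠ x1 := by intro hh; subst hh; exact no3 h6 a12 hz2 hzv2
    have ni3v2 : v2 ≠ x3 := by intro hh; subst hh; exact no3 h6 hz2 hzv2 a23.symm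
    have ni6v2 : v2 ≠ x6 := by intro hh; subst hh; exact no4 h6 a61 a12 hz2 hzv2 n26.symm hz_1.symm
    have nipv2 : v2 ≠ p := by intro hh; subst hh; exact spz hzv2.symm
    have niqv2 : v2 ≠ q := by intro hh; subst hh; exact sqz hzv2.symm
    have nidv2 : v2 ≠ d := by intro hh; subst hh; exact sdz hzv2.symm
    have ni4v2 : v2 ≠ x4 := by intro hh; subst hh; exact szx4 hzv2
    have sA1iv2 : ¬ G.Adj q v2 := fun hh => no5 h6 hh hzv2.symm hz2.symm a12.symm hq1 nzq.symm hq_2 hv2_2 ni1v2 hz_1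
    have sfiv2 : ¬ G.Adj y v2 := fun hh => no4 h6 hh hzv2.symm hz2.symm hy2 hyz hv2_2
    have sijv2 : ¬ G.Adj v2 j := fun hh => no5 h6 hzv2.symm hz2.symm a23 hj3 hh.symm hv2_2 ni3v2 hz_3 njz.symm hj_2.symm
    exact build G hreg x1 x2 x6 x3 p d z x4 q b x5 e y v2 j x5
        hq1 hp1 a61.symm a12 hbp a56.symm hd6 hde hy2 hz2 a23 hzv2 hj3 a34 a45 sA1bb sq5 sqe sqy
        sA1iv2 sjq sq5 sb5b hb_e (fun hsymm => sybb hsymm.symm) (fun hsymm => hh2.2.2 hsymm.symm)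
        hb_j sb5b s5e (fun hsymm => sy5 hsymm.symm) (fun hsymm => hh2.1 hsymm.symm)
        (fun hsymm => sj5 hsymm.symm) (G.loopless.irrefl x5) (fun hsymm => hye hsymm.symm)
        (fun hsymm => hh2.2.1 hsymm.symm) (fun hsymm => hj_e hsymm.symm)
        (fun hsymm => s5e hsymm.symm) sfiv2 syj sy5 sijv2 hh2.1 sj5 spd spz spx4 sdz sdx4 szx4 s63
        n13 hd_1.symm hz_1.symm n14 hb_1.symm n15 ne1.symm hy_1.symm ni1v2.symm nj1.symm n15 n26
        hp_2.symm nd2.symm n24 hq_2.symm nb2b.symm n25 ne2.symm hv2_2.symm hj_2.symm n25 hp_6.symm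
        nz6.symm n46.symm hq_6.symm nb6b.symm he6.symm ny6.symm ni6v2.symm nj6.symm n56.symm
        np3.symm nd3.symm hz_3.symm nq3.symm nb3b.symm n35 ne3.symm hy_3.symm ni3v2.symm n35 hpq
        np5 nep.symm nyp.symm nipv2.symm njp.symm np5 ndq nbdb.symm hd_5 nyd.symm nidv2.symm
        njd.symm hd_5 nzq nbzb.symm nz5 nze hyz.symm njz.symm nz5 nq4.symm nb4b.symm n45 ne4.symm
        ny4.symm ni4v2.symm hj_4.symm
  by_cases hh3 : ¬G.Adj v3 x5 ∧ ¬G.Adj v3 e ∧ ¬G.Adj v3 b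
  · have ni1v3 : v3 ≠ x1 := by intro hh; subst hh; exact no3 h6 a12 hz2 hzv3
    have ni3v3 : v3 ≠ x3 := by intro hh; subst hh; exact no3 h6 hz2 hzv3 a23.symm
    have ni6v3 : v3 ≠ x6 := by intro hh; subst hh; exact no4 h6 a61 a12 hz2 hzv3 n26.symm hz_1.symm
    have nipv3 : v3 ≠ p := by intro hh; subst hh; exact spz hzv3.symm
    have niqv3 : v3 ≠ q := by intro hh; subst hh; exact sqz hzv3.symm
    have nidv3 : v3 ≠ d := by intro hh; subst hh; exact sdz hzv3.symm
    have ni4v3 : v3 ≠ x4 := by intro hh; subst hh; exact szx4 hzv3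
    have sA1iv3 : ¬ G.Adj q v3 := fun hh => no5 h6 hh hzv3.symm hz2.symm a12.symm hq1 nzq.symm hq_2 hv3_2 ni1v3 hz_1
    have sfiv3 : ¬ G.Adj y v3 := fun hh => no4 h6 hh hzv3.symm hz2.symm hy2 hyz hv3_2
    have sijv3 : ¬ G.Adj v3 j := fun hh => no5 h6 hzv3.symm hz2.symm a23 hj3 hh.symm hv3_2 ni3v3 hz_3 njz.symm hj_2.symm
    exact build G hreg x1 x2 x6 x3 p d z x4 q b x5 e y v3 j x5
        hq1 hp1 a61.symm a12 hbp a56.symm hd6 hde hy2 hz2 a23 hzv3 hj3 a34 a45 sA1bb sq5 sqe sqy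
        sA1iv3 sjq sq5 sb5b hb_e (fun hsymm => sybb hsymm.symm) (fun hsymm => hh3.2.2 hsymm.symm)
        hb_j sb5b s5e (fun hsymm => sy5 hsymm.symm) (fun hsymm => hh3.1 hsymm.symm)
        (fun hsymm => sj5 hsymm.symm) (G.loopless.irrefl x5) (fun hsymm => hye hsymm.symm)
        (fun hsymm => hh3.2.1 hsymm.symm) (fun hsymm => hj_e hsymm.symm)
        (fun hsymm => s5e hsymm.symm) sfiv3 syj sy5 sijv3 hh3.1 sj5 spd spz spx4 sdz sdx4 szx4 s63
        n13 hd_1.symm hz_1.symm n14 hb_1.symm n15 ne1.symm hy_1.symm ni1v3.symm nj1.symm n15 n26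
        hp_2.symm nd2.symm n24 hq_2.symm nb2b.symm n25 ne2.symm hv3_2.symm hj_2.symm n25 hp_6.symm
        nz6.symm n46.symm hq_6.symm nb6b.symm he6.symm ny6.symm ni6v3.symm nj6.symm n56.symm
        np3.symm nd3.symm hz_3.symm nq3.symm nb3b.symm n35 ne3.symm hy_3.symm ni3v3.symm n35 hpq
        np5 nep.symm nyp.symm nipv3.symm njp.symm np5 ndq nbdb.symm hd_5 nyd.symm nidv3.symm
        njd.symm hd_5 nzq nbzb.symm nz5 nze hyz.symm njz.symm nz5 nq4.symm nb4b.symm n45 ne4.symm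
        ny4.symm ni4v3.symm hj_4.symm
  have bl1 : G.Adj u1 x5 ∨ G.Adj u1 e ∨ G.Adj u1 b := by
    by_contra hc; push_neg at hc; exact hg1 ⟨hc.1, hc.2.1, hc.2.2⟩
  have bl2 : G.Adj u2 x5 ∨ G.Adj u2 e ∨ G.Adj u2 b := by
    by_contra hc; push_neg at hc; exact hg2 ⟨hc.1, hc.2.1, hc.2.2⟩
  have bl3 : G.Adj u3 x5 ∨ G.Adj u3 e ∨ G.Adj u3 b := by
    by_contra hc; push_neg at hc; exact hg3 ⟨hc.1, hc.2.1, hc.2.2⟩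
  have bm1 : G.Adj v1 x5 ∨ G.Adj v1 e ∨ G.Adj v1 b := by
    by_contra hc; push_neg at hc; exact hh1 ⟨hc.1, hc.2.1, hc.2.2⟩
  have bm2 : G.Adj v2 x5 ∨ G.Adj v2 e ∨ G.Adj v2 b := by
    by_contra hc; push_neg at hc; exact hh2 ⟨hc.1, hc.2.1, hc.2.2⟩
  have bm3 : G.Adj v3 x5 ∨ G.Adj v3 e ∨ G.Adj v3 b := by
    by_contra hc; push_neg at hc; exact hh3 ⟨hc.1, hc.2.1, hc.2.2⟩
  obtain ⟨ue, ub, huem, hubm, hue_e, hub_b, hub_5, hub_e⟩ :=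
    extract3 (P := fun w => G.Adj w x5) (Q := fun w => G.Adj w e) (R := fun w => G.Adj w b)
      (a := u1) (b := u2) (c := u3)
      (fun ha1 ha2 => no4 h6 ha1 ha2.symm hyu2.symm hyu1 hu12 ny5.symm)
      (fun ha1 ha2 => no4 h6 ha1 ha2.symm hyu3.symm hyu1 hu13 ny5.symm)
      (fun ha1 ha2 => no4 h6 ha1 ha2.symm hyu3.symm hyu2 hu23 ny5.symm)
      (fun ha1 ha2 => no4 h6 ha1 ha2.symm hyu2.symm hyu1 hu12 nye.symm)
      (fun ha1 ha2 => no4 h6 ha1 ha2.symm hyu3.symm hyu1 hu13 nye.symm)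
      (fun ha1 ha2 => no4 h6 ha1 ha2.symm hyu3.symm hyu2 hu23 nye.symm)
      (fun ha1 ha2 => no4 h6 ha1 ha2.symm hyu2.symm hyu1 hu12 nbyb)
      (fun ha1 ha2 => no4 h6 ha1 ha2.symm hyu3.symm hyu1 hu13 nbyb)
      (fun ha1 ha2 => no4 h6 ha1 ha2.symm hyu3.symm hyu2 hu23 nbyb)
      bl1 bl2 bl3
  obtain ⟨ve, vr, hvem, hvrm, hve_e, hvr_b, hvr_5, hvr_e⟩ :=
    extract3 (P := fun w => G.Adj w x5) (Q := fun w => G.Adj w e) (R := fun w => G.Adj w b)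
      (a := v1) (b := v2) (c := v3)
      (fun ha1 ha2 => no4 h6 ha1 ha2.symm hzv2.symm hzv1 hv12 nz5.symm)
      (fun ha1 ha2 => no4 h6 ha1 ha2.symm hzv3.symm hzv1 hv13 nz5.symm)
      (fun ha1 ha2 => no4 h6 ha1 ha2.symm hzv3.symm hzv2 hv23 nz5.symm)
      (fun ha1 ha2 => no4 h6 ha1 ha2.symm hzv2.symm hzv1 hv12 nze.symm)
      (fun ha1 ha2 => no4 h6 ha1 ha2.symm hzv3.symm hzv1 hv13 nze.symm)
      (fun ha1 ha2 => no4 h6 ha1 ha2.symm hzv3.symm hzv2 hv23 nze.symm)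
      (fun ha1 ha2 => no4 h6 ha1 ha2.symm hzv2.symm hzv1 hv12 nbzb)
      (fun ha1 ha2 => no4 h6 ha1 ha2.symm hzv3.symm hzv1 hv13 nbzb)
      (fun ha1 ha2 => no4 h6 ha1 ha2.symm hzv3.symm hzv2 hv23 nbzb)
      bm1 bm2 bm3
  have hyue : G.Adj y ue := by rcases huem with rfl|rfl|rfl <;> assumption
  have hue2 : ue ≠ x2 := by rcases huem with rfl|rfl|rfl <;> assumption
  have hyub : G.Adj y ub := by rcases hubm with rfl|rfl|rfl <;> assumption
  have hub2 : ub ≠ x2 := by rcases hubm with rfl|rfl|rfl <;> assumption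
  have hzve : G.Adj z ve := by rcases hvem with rfl|rfl|rfl <;> assumption
  have hve2 : ve ≠ x2 := by rcases hvem with rfl|rfl|rfl <;> assumption
  have nue1 : ue ≠ x1 := by intro hh; subst hh; exact no3 h6 a12 hy2 hyue
  have nve1 : ve ≠ x1 := by intro hh; subst hh; exact no3 h6 a12 hz2 hzve
  have ni1ub : ub ≠ x1 := by intro hh; subst hh; exact no3 h6 a12 hy2 hyub
  have ni3ub : ub ≠ x3 := by intro hh; subst hh; exact no3 h6 hy2 hyub a23.symm
  have ni6ub : ub ≠ x6 := by intro hh; subst hh; exact no4 h6 a61 a12 hy2 hyub n26.symm hy_1.symm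
  have nipub : ub ≠ p := by intro hh; subst hh; exact spy hyub.symm
  have niqub : ub ≠ q := by intro hh; subst hh; exact sqy hyub.symm
  have nidub : ub ≠ d := by intro hh; subst hh; exact sdy hyub.symm
  have ni4ub : ub ≠ x4 := by intro hh; subst hh; exact syx4 hyub
  have sA1iub : ¬ G.Adj q ub := fun hh => no5 h6 hh hyub.symm hy2.symm a12.symm hq1 nyq.symm hq_2 hub2 ni1ub hy_1
  have sfiub : ¬ G.Adj z ub := fun hh => no4 h6 hh hyub.symm hy2.symm hz2 hyz.symm hub2
  have sijub : ¬ G.Adj ub j := fun hh => no5 h6 hyub.symm hy2.symm a23 hj3 hh.symm hub2 ni3ub hy_3 njy.symm hj_2.symm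
  have sPub : ¬ G.Adj p ub := fun hh => no5 h6 hh hyub.symm hy2.symm a12.symm hp1 nyp.symm hp_2 hub2 ni1ub hy_1
  by_cases hr1 : ¬G.Adj c1 e ∧ ¬G.Adj c1 j ∧ ¬G.Adj c1 ub
  · have nb2c1 : c1 ≠ x2 := by intro hh; subst hh; exact no3 h6 hAc1 a12.symm hp1
    have nb3c1 : c1 ≠ x3 := by intro hh; subst hh; exact no4 h6 hAc1 a23.symm a12.symm hp1 hp_2 n13.symm
    have nb4c1 : c1 ≠ x4 := by intro hh; subst hh; exact spx4 hAc1
    have nb6c1 : c1 ≠ x6 := by intro hh; subst hh; exact no3 h6 hAc1 a61 hp1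
    have nbdc1 : c1 ≠ d := by intro hh; subst hh; exact spd hAc1
    have nbyc1 : c1 ≠ y := by intro hh; subst hh; exact spy hAc1
    have nbzc1 : c1 ≠ z := by intro hh; subst hh; exact spz hAc1
    have sb5c1 : ¬ G.Adj c1 x5 := fun hh => no5 h6 hh a56 a61 hp1 hAc1 nb6c1 hc1_1 n15.symm np5.symm hp_6.symm
    have sA1bc1 : ¬ G.Adj q c1 := fun hh => no4 h6 hh hAc1.symm hp1.symm hq1 hpq.symm hc1_1
    have sybc1 : ¬ G.Adj y c1 := fun hh => no5 h6 hh hAc1.symm hp1.symm a12 hy2 nyp hy_1 hc1_1 nb2c1 hp_2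
    have szbc1 : ¬ G.Adj z c1 := fun hh => no5 h6 hh hAc1.symm hp1.symm a12 hz2 nzp hz_1 hc1_1 nb2c1 hp_2
    exact build G hreg x1 x2 x6 x3 p d y x4 q c1 x5 e z ub j x5
        hq1 hp1 a61.symm a12 hAc1 a56.symm hd6 hde hz2 hy2 a23 hyub hj3 a34 a45 sA1bc1 sq5 sqe sqz
        sA1iub sjq sq5 sb5c1 hr1.1 (fun hsymm => szbc1 hsymm.symm) hr1.2.2 hr1.2.1 sb5c1 s5e
        (fun hsymm => sz5 hsymm.symm) (fun hsymm => hub_5 hsymm.symm)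
        (fun hsymm => sj5 hsymm.symm) (G.loopless.irrefl x5) (fun hsymm => hze hsymm.symm)
        (fun hsymm => hub_e hsymm.symm) (fun hsymm => hj_e hsymm.symm)
        (fun hsymm => s5e hsymm.symm) sfiub szj sz5 sijub hub_5 sj5 spd spy spx4 sdy sdx4 syx4 s63
        n13 hd_1.symm hy_1.symm n14 hc1_1.symm n15 ne1.symm hz_1.symm ni1ub.symm nj1.symm n15 n26
        hp_2.symm nd2.symm n24 hq_2.symm nb2c1.symm n25 ne2.symm hub2.symm hj_2.symm n25 hp_6.symm
        ny6.symm n46.symm hq_6.symm nb6c1.symm he6.symm nz6.symm ni6ub.symm nj6.symm n56.symm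
        np3.symm nd3.symm hy_3.symm nq3.symm nb3c1.symm n35 ne3.symm hz_3.symm ni3ub.symm n35 hpq
        np5 nep.symm nzp.symm nipub.symm njp.symm np5 ndq nbdc1.symm hd_5 nzd.symm nidub.symm
        njd.symm hd_5 nyq nbyc1.symm ny5 nye hyz njy.symm ny5 nq4.symm nb4c1.symm n45 ne4.symm
        nz4.symm ni4ub.symm hj_4.symm
  by_cases hr2 : ¬G.Adj c2 e ∧ ¬G.Adj c2 j ∧ ¬G.Adj c2 ub
  · have nb2c2 : c2 ≠ x2 := by intro hh; subst hh; exact no3 h6 hAc2 a12.symm hp1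
    have nb3c2 : c2 ≠ x3 := by intro hh; subst hh; exact no4 h6 hAc2 a23.symm a12.symm hp1 hp_2 n13.symm
    have nb4c2 : c2 ≠ x4 := by intro hh; subst hh; exact spx4 hAc2
    have nb6c2 : c2 ≠ x6 := by intro hh; subst hh; exact no3 h6 hAc2 a61 hp1
    have nbdc2 : c2 ≠ d := by intro hh; subst hh; exact spd hAc2
    have nbyc2 : c2 ≠ y := by intro hh; subst hh; exact spy hAc2
    have nbzc2 : c2 ≠ z := by intro hh; subst hh; exact spz hAc2
    have sb5c2 : ¬ G.Adj c2 x5 := fun hh => no5 h6 hh a56 a61 hp1 hAc2 nb6c2 hc2_1 n15.symm np5.symm hp_6.symm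
    have sA1bc2 : ¬ G.Adj q c2 := fun hh => no4 h6 hh hAc2.symm hp1.symm hq1 hpq.symm hc2_1
    have sybc2 : ¬ G.Adj y c2 := fun hh => no5 h6 hh hAc2.symm hp1.symm a12 hy2 nyp hy_1 hc2_1 nb2c2 hp_2
    have szbc2 : ¬ G.Adj z c2 := fun hh => no5 h6 hh hAc2.symm hp1.symm a12 hz2 nzp hz_1 hc2_1 nb2c2 hp_2
    exact build G hreg x1 x2 x6 x3 p d y x4 q c2 x5 e z ub j x5
        hq1 hp1 a61.symm a12 hAc2 a56.symm hd6 hde hz2 hy2 a23 hyub hj3 a34 a45 sA1bc2 sq5 sqe sqz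
        sA1iub sjq sq5 sb5c2 hr2.1 (fun hsymm => szbc2 hsymm.symm) hr2.2.2 hr2.2.1 sb5c2 s5e
        (fun hsymm => sz5 hsymm.symm) (fun hsymm => hub_5 hsymm.symm)
        (fun hsymm => sj5 hsymm.symm) (G.loopless.irrefl x5) (fun hsymm => hze hsymm.symm)
        (fun hsymm => hub_e hsymm.symm) (fun hsymm => hj_e hsymm.symm)
        (fun hsymm => s5e hsymm.symm) sfiub szj sz5 sijub hub_5 sj5 spd spy spx4 sdy sdx4 syx4 s63
        n13 hd_1.symm hy_1.symm n14 hc2_1.symm n15 ne1.symm hz_1.symm ni1ub.symm nj1.symm n15 n26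
        hp_2.symm nd2.symm n24 hq_2.symm nb2c2.symm n25 ne2.symm hub2.symm hj_2.symm n25 hp_6.symm
        ny6.symm n46.symm hq_6.symm nb6c2.symm he6.symm nz6.symm ni6ub.symm nj6.symm n56.symm
        np3.symm nd3.symm hy_3.symm nq3.symm nb3c2.symm n35 ne3.symm hz_3.symm ni3ub.symm n35 hpq
        np5 nep.symm nzp.symm nipub.symm njp.symm np5 ndq nbdc2.symm hd_5 nzd.symm nidub.symm
        njd.symm hd_5 nyq nbyc2.symm ny5 nye hyz njy.symm ny5 nq4.symm nb4c2.symm n45 ne4.symm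
        nz4.symm ni4ub.symm hj_4.symm
  by_cases hr3 : ¬G.Adj c3 e ∧ ¬G.Adj c3 j ∧ ¬G.Adj c3 ub
  · have nb2c3 : c3 ≠ x2 := by intro hh; subst hh; exact no3 h6 hAc3 a12.symm hp1
    have nb3c3 : c3 ≠ x3 := by intro hh; subst hh; exact no4 h6 hAc3 a23.symm a12.symm hp1 hp_2 n13.symm
    have nb4c3 : c3 ≠ x4 := by intro hh; subst hh; exact spx4 hAc3
    have nb6c3 : c3 ≠ x6 := by intro hh; subst hh; exact no3 h6 hAc3 a61 hp1
    have nbdc3 : c3 ≠ d := by intro hh; subst hh; exact spd hAc3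
    have nbyc3 : c3 ≠ y := by intro hh; subst hh; exact spy hAc3
    have nbzc3 : c3 ≠ z := by intro hh; subst hh; exact spz hAc3
    have sb5c3 : ¬ G.Adj c3 x5 := fun hh => no5 h6 hh a56 a61 hp1 hAc3 nb6c3 hc3_1 n15.symm np5.symm hp_6.symm
    have sA1bc3 : ¬ G.Adj q c3 := fun hh => no4 h6 hh hAc3.symm hp1.symm hq1 hpq.symm hc3_1
    have sybc3 : ¬ G.Adj y c3 := fun hh => no5 h6 hh hAc3.symm hp1.symm a12 hy2 nyp hy_1 hc3_1 nb2c3 hp_2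
    have szbc3 : ¬ G.Adj z c3 := fun hh => no5 h6 hh hAc3.symm hp1.symm a12 hz2 nzp hz_1 hc3_1 nb2c3 hp_2
    exact build G hreg x1 x2 x6 x3 p d y x4 q c3 x5 e z ub j x5
        hq1 hp1 a61.symm a12 hAc3 a56.symm hd6 hde hz2 hy2 a23 hyub hj3 a34 a45 sA1bc3 sq5 sqe sqz
        sA1iub sjq sq5 sb5c3 hr3.1 (fun hsymm => szbc3 hsymm.symm) hr3.2.2 hr3.2.1 sb5c3 s5e
        (fun hsymm => sz5 hsymm.symm) (fun hsymm => hub_5 hsymm.symm)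
        (fun hsymm => sj5 hsymm.symm) (G.loopless.irrefl x5) (fun hsymm => hze hsymm.symm)
        (fun hsymm => hub_e hsymm.symm) (fun hsymm => hj_e hsymm.symm)
        (fun hsymm => s5e hsymm.symm) sfiub szj sz5 sijub hub_5 sj5 spd spy spx4 sdy sdx4 syx4 s63
        n13 hd_1.symm hy_1.symm n14 hc3_1.symm n15 ne1.symm hz_1.symm ni1ub.symm nj1.symm n15 n26
        hp_2.symm nd2.symm n24 hq_2.symm nb2c3.symm n25 ne2.symm hub2.symm hj_2.symm n25 hp_6.symm
        ny6.symm n46.symm hq_6.symm nb6c3.symm he6.symm nz6.symm ni6ub.symm nj6.symm n56.symm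
        np3.symm nd3.symm hy_3.symm nq3.symm nb3c3.symm n35 ne3.symm hz_3.symm ni3ub.symm n35 hpq
        np5 nep.symm nzp.symm nipub.symm njp.symm np5 ndq nbdc3.symm hd_5 nzd.symm nidub.symm
        njd.symm hd_5 nyq nbyc3.symm ny5 nye hyz njy.symm ny5 nq4.symm nb4c3.symm n45 ne4.symm
        nz4.symm ni4ub.symm hj_4.symm
  obtain ⟨w1, w2, w3, hw12, hw13, hw23, hQw1, hQw2, hQw3, hw1_1, hw2_1, hw3_1⟩ :=
    three_of G (hdeg q) hq1.symm
  by_cases hs1 : ¬G.Adj w1 e ∧ ¬G.Adj w1 j ∧ ¬G.Adj w1 ub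
  · have nb2w1 : w1 ≠ x2 := by intro hh; subst hh; exact no3 h6 hQw1 a12.symm hq1
    have nb3w1 : w1 ≠ x3 := by intro hh; subst hh; exact no4 h6 hQw1 a23.symm a12.symm hq1 hq_2 n13.symm
    have nb4w1 : w1 ≠ x4 := by intro hh; subst hh; exact sqx4 hQw1
    have nb6w1 : w1 ≠ x6 := by intro hh; subst hh; exact no3 h6 hQw1 a61 hq1
    have nbdw1 : w1 ≠ d := by intro hh; subst hh; exact sqd hQw1
    have nbyw1 : w1 ≠ y := by intro hh; subst hh; exact sqy hQw1
    have nbzw1 : w1 ≠ z := by intro hh; subst hh; exact sqz hQw1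
    have sb5w1 : ¬ G.Adj w1 x5 := fun hh => no5 h6 hh a56 a61 hq1 hQw1 nb6w1 hw1_1 n15.symm nq5.symm hq_6.symm
    have sA1bw1 : ¬ G.Adj p w1 := fun hh => no4 h6 hh hQw1.symm hq1.symm hp1 hpq hw1_1
    have sybw1 : ¬ G.Adj y w1 := fun hh => no5 h6 hh hQw1.symm hq1.symm a12 hy2 nyq hy_1 hw1_1 nb2w1 hq_2
    have szbw1 : ¬ G.Adj z w1 := fun hh => no5 h6 hh hQw1.symm hq1.symm a12 hz2 nzq hz_1 hw1_1 nb2w1 hq_2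
    exact build G hreg x1 x2 x6 x3 q d y x4 p w1 x5 e z ub j x5
        hp1 hq1 a61.symm a12 hQw1 a56.symm hd6 hde hz2 hy2 a23 hyub hj3 a34 a45 sA1bw1 sp5 spe spz
        sPub sjp sp5 sb5w1 hs1.1 (fun hsymm => szbw1 hsymm.symm) hs1.2.2 hs1.2.1 sb5w1 s5e
        (fun hsymm => sz5 hsymm.symm) (fun hsymm => hub_5 hsymm.symm)
        (fun hsymm => sj5 hsymm.symm) (G.loopless.irrefl x5) (fun hsymm => hze hsymm.symm)
        (fun hsymm => hub_e hsymm.symm) (fun hsymm => hj_e hsymm.symm)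
        (fun hsymm => s5e hsymm.symm) sfiub szj sz5 sijub hub_5 sj5 sqd sqy sqx4 sdy sdx4 syx4 s63
        n13 hd_1.symm hy_1.symm n14 hw1_1.symm n15 ne1.symm hz_1.symm ni1ub.symm nj1.symm n15 n26
        hq_2.symm nd2.symm n24 hp_2.symm nb2w1.symm n25 ne2.symm hub2.symm hj_2.symm n25 hq_6.symm
        ny6.symm n46.symm hp_6.symm nb6w1.symm he6.symm nz6.symm ni6ub.symm nj6.symm n56.symm
        nq3.symm nd3.symm hy_3.symm np3.symm nb3w1.symm n35 ne3.symm hz_3.symm ni3ub.symm n35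
        hpq.symm nq5 neq.symm nzq.symm niqub.symm njq.symm nq5 ndp nbdw1.symm hd_5 nzd.symm
        nidub.symm njd.symm hd_5 nyp nbyw1.symm ny5 nye hyz njy.symm ny5 np4.symm nb4w1.symm n45
        ne4.symm nz4.symm ni4ub.symm hj_4.symm
  by_cases hs2 : ¬G.Adj w2 e ∧ ¬G.Adj w2 j ∧ ¬G.Adj w2 ub
  · have nb2w2 : w2 ≠ x2 := by intro hh; subst hh; exact no3 h6 hQw2 a12.symm hq1
    have nb3w2 : w2 ≠ x3 := by intro hh; subst hh; exact no4 h6 hQw2 a23.symm a12.symm hq1 hq_2 n13.symm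
    have nb4w2 : w2 ≠ x4 := by intro hh; subst hh; exact sqx4 hQw2
    have nb6w2 : w2 ≠ x6 := by intro hh; subst hh; exact no3 h6 hQw2 a61 hq1
    have nbdw2 : w2 ≠ d := by intro hh; subst hh; exact sqd hQw2
    have nbyw2 : w2 ≠ y := by intro hh; subst hh; exact sqy hQw2
    have nbzw2 : w2 ≠ z := by intro hh; subst hh; exact sqz hQw2
    have sb5w2 : ¬ G.Adj w2 x5 := fun hh => no5 h6 hh a56 a61 hq1 hQw2 nb6w2 hw2_1 n15.symm nq5.symm hq_6.symm
    have sA1bw2 : ¬ G.Adj p w2 := fun hh => no4 h6 hh hQw2.symm hq1.symm hp1 hpq hw2_1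
    have sybw2 : ¬ G.Adj y w2 := fun hh => no5 h6 hh hQw2.symm hq1.symm a12 hy2 nyq hy_1 hw2_1 nb2w2 hq_2
    have szbw2 : ¬ G.Adj z w2 := fun hh => no5 h6 hh hQw2.symm hq1.symm a12 hz2 nzq hz_1 hw2_1 nb2w2 hq_2
    exact build G hreg x1 x2 x6 x3 q d y x4 p w2 x5 e z ub j x5
        hp1 hq1 a61.symm a12 hQw2 a56.symm hd6 hde hz2 hy2 a23 hyub hj3 a34 a45 sA1bw2 sp5 spe spz
        sPub sjp sp5 sb5w2 hs2.1 (fun hsymm => szbw2 hsymm.symm) hs2.2.2 hs2.2.1 sb5w2 s5e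
        (fun hsymm => sz5 hsymm.symm) (fun hsymm => hub_5 hsymm.symm)
        (fun hsymm => sj5 hsymm.symm) (G.loopless.irrefl x5) (fun hsymm => hze hsymm.symm)
        (fun hsymm => hub_e hsymm.symm) (fun hsymm => hj_e hsymm.symm)
        (fun hsymm => s5e hsymm.symm) sfiub szj sz5 sijub hub_5 sj5 sqd sqy sqx4 sdy sdx4 syx4 s63
        n13 hd_1.symm hy_1.symm n14 hw2_1.symm n15 ne1.symm hz_1.symm ni1ub.symm nj1.symm n15 n26
        hq_2.symm nd2.symm n24 hp_2.symm nb2w2.symm n25 ne2.symm hub2.symm hj_2.symm n25 hq_6.symm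
        ny6.symm n46.symm hp_6.symm nb6w2.symm he6.symm nz6.symm ni6ub.symm nj6.symm n56.symm
        nq3.symm nd3.symm hy_3.symm np3.symm nb3w2.symm n35 ne3.symm hz_3.symm ni3ub.symm n35
        hpq.symm nq5 neq.symm nzq.symm niqub.symm njq.symm nq5 ndp nbdw2.symm hd_5 nzd.symm
        nidub.symm njd.symm hd_5 nyp nbyw2.symm ny5 nye hyz njy.symm ny5 np4.symm nb4w2.symm n45
        ne4.symm nz4.symm ni4ub.symm hj_4.symm
  by_cases hs3 : ¬G.Adj w3 e ∧ ¬G.Adj w3 j ∧ ¬G.Adj w3 ub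
  · have nb2w3 : w3 ≠ x2 := by intro hh; subst hh; exact no3 h6 hQw3 a12.symm hq1
    have nb3w3 : w3 ≠ x3 := by intro hh; subst hh; exact no4 h6 hQw3 a23.symm a12.symm hq1 hq_2 n13.symm
    have nb4w3 : w3 ≠ x4 := by intro hh; subst hh; exact sqx4 hQw3
    have nb6w3 : w3 ≠ x6 := by intro hh; subst hh; exact no3 h6 hQw3 a61 hq1
    have nbdw3 : w3 ≠ d := by intro hh; subst hh; exact sqd hQw3
    have nbyw3 : w3 ≠ y := by intro hh; subst hh; exact sqy hQw3
    have nbzw3 : w3 ≠ z := by intro hh; subst hh; exact sqz hQw3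
    have sb5w3 : ¬ G.Adj w3 x5 := fun hh => no5 h6 hh a56 a61 hq1 hQw3 nb6w3 hw3_1 n15.symm nq5.symm hq_6.symm
    have sA1bw3 : ¬ G.Adj p w3 := fun hh => no4 h6 hh hQw3.symm hq1.symm hp1 hpq hw3_1
    have sybw3 : ¬ G.Adj y w3 := fun hh => no5 h6 hh hQw3.symm hq1.symm a12 hy2 nyq hy_1 hw3_1 nb2w3 hq_2
    have szbw3 : ¬ G.Adj z w3 := fun hh => no5 h6 hh hQw3.symm hq1.symm a12 hz2 nzq hz_1 hw3_1 nb2w3 hq_2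
    exact build G hreg x1 x2 x6 x3 q d y x4 p w3 x5 e z ub j x5
        hp1 hq1 a61.symm a12 hQw3 a56.symm hd6 hde hz2 hy2 a23 hyub hj3 a34 a45 sA1bw3 sp5 spe spz
        sPub sjp sp5 sb5w3 hs3.1 (fun hsymm => szbw3 hsymm.symm) hs3.2.2 hs3.2.1 sb5w3 s5e
        (fun hsymm => sz5 hsymm.symm) (fun hsymm => hub_5 hsymm.symm)
        (fun hsymm => sj5 hsymm.symm) (G.loopless.irrefl x5) (fun hsymm => hze hsymm.symm)
        (fun hsymm => hub_e hsymm.symm) (fun hsymm => hj_e hsymm.symm)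
        (fun hsymm => s5e hsymm.symm) sfiub szj sz5 sijub hub_5 sj5 sqd sqy sqx4 sdy sdx4 syx4 s63
        n13 hd_1.symm hy_1.symm n14 hw3_1.symm n15 ne1.symm hz_1.symm ni1ub.symm nj1.symm n15 n26
        hq_2.symm nd2.symm n24 hp_2.symm nb2w3.symm n25 ne2.symm hub2.symm hj_2.symm n25 hq_6.symm
        ny6.symm n46.symm hp_6.symm nb6w3.symm he6.symm nz6.symm ni6ub.symm nj6.symm n56.symm
        nq3.symm nd3.symm hy_3.symm np3.symm nb3w3.symm n35 ne3.symm hz_3.symm ni3ub.symm n35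
        hpq.symm nq5 neq.symm nzq.symm niqub.symm njq.symm nq5 ndp nbdw3.symm hd_5 nzd.symm
        nidub.symm njd.symm hd_5 nyp nbyw3.symm ny5 nye hyz njy.symm ny5 np4.symm nb4w3.symm n45
        ne4.symm nz4.symm ni4ub.symm hj_4.symm
  have br1 : G.Adj c1 j ∨ G.Adj c1 e ∨ G.Adj c1 ub := by
    by_contra hc; push_neg at hc; exact hr1 ⟨hc.2.1, hc.1, hc.2.2⟩
  have br2 : G.Adj c2 j ∨ G.Adj c2 e ∨ G.Adj c2 ub := by
    by_contra hc; push_neg at hc; exact hr2 ⟨hc.2.1, hc.1, hc.2.2⟩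
  have br3 : G.Adj c3 j ∨ G.Adj c3 e ∨ G.Adj c3 ub := by
    by_contra hc; push_neg at hc; exact hr3 ⟨hc.2.1, hc.1, hc.2.2⟩
  have bs1 : G.Adj w1 j ∨ G.Adj w1 e ∨ G.Adj w1 ub := by
    by_contra hc; push_neg at hc; exact hs1 ⟨hc.2.1, hc.1, hc.2.2⟩
  have bs2 : G.Adj w2 j ∨ G.Adj w2 e ∨ G.Adj w2 ub := by
    by_contra hc; push_neg at hc; exact hs2 ⟨hc.2.1, hc.1, hc.2.2⟩
  have bs3 : G.Adj w3 j ∨ G.Adj w3 e ∨ G.Adj w3 ub := by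
    by_contra hc; push_neg at hc; exact hs3 ⟨hc.2.1, hc.1, hc.2.2⟩
  obtain ⟨ce, cr, hcem, hcrm, hce_e, hcr_u, hcr_j, hcr_e⟩ :=
    extract3 (P := fun w => G.Adj w j) (Q := fun w => G.Adj w e) (R := fun w => G.Adj w ub)
      (a := c1) (b := c2) (c := c3)
      (fun ha1 ha2 => no4 h6 ha1 ha2.symm hAc2.symm hAc1 hc12 njp)
      (fun ha1 ha2 => no4 h6 ha1 ha2.symm hAc3.symm hAc1 hc13 njp)
      (fun ha1 ha2 => no4 h6 ha1 ha2.symm hAc3.symm hAc2 hc23 njp)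
      (fun ha1 ha2 => no4 h6 ha1 ha2.symm hAc2.symm hAc1 hc12 nep)
      (fun ha1 ha2 => no4 h6 ha1 ha2.symm hAc3.symm hAc1 hc13 nep)
      (fun ha1 ha2 => no4 h6 ha1 ha2.symm hAc3.symm hAc2 hc23 nep)
      (fun ha1 ha2 => no4 h6 ha1 ha2.symm hAc2.symm hAc1 hc12 nipub)
      (fun ha1 ha2 => no4 h6 ha1 ha2.symm hAc3.symm hAc1 hc13 nipub)
      (fun ha1 ha2 => no4 h6 ha1 ha2.symm hAc3.symm hAc2 hc23 nipub)
      br1 br2 br3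
  obtain ⟨cf, cg, hcfm, hcgm, hcf_e, hcg_u, hcg_j, hcg_e⟩ :=
    extract3 (P := fun w => G.Adj w j) (Q := fun w => G.Adj w e) (R := fun w => G.Adj w ub)
      (a := w1) (b := w2) (c := w3)
      (fun ha1 ha2 => no4 h6 ha1 ha2.symm hQw2.symm hQw1 hw12 njq)
      (fun ha1 ha2 => no4 h6 ha1 ha2.symm hQw3.symm hQw1 hw13 njq)
      (fun ha1 ha2 => no4 h6 ha1 ha2.symm hQw3.symm hQw2 hw23 njq)
      (fun ha1 ha2 => no4 h6 ha1 ha2.symm hQw2.symm hQw1 hw12 neq)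
      (fun ha1 ha2 => no4 h6 ha1 ha2.symm hQw3.symm hQw1 hw13 neq)
      (fun ha1 ha2 => no4 h6 ha1 ha2.symm hQw3.symm hQw2 hw23 neq)
      (fun ha1 ha2 => no4 h6 ha1 ha2.symm hQw2.symm hQw1 hw12 niqub)
      (fun ha1 ha2 => no4 h6 ha1 ha2.symm hQw3.symm hQw1 hw13 niqub)
      (fun ha1 ha2 => no4 h6 ha1 ha2.symm hQw3.symm hQw2 hw23 niqub)
      bs1 bs2 bs3
  have hpce : G.Adj p ce := by rcases hcem with rfl|rfl|rfl <;> assumption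
  have hce1 : ce ≠ x1 := by rcases hcem with rfl|rfl|rfl <;> assumption
  have hqcf : G.Adj q cf := by rcases hcfm with rfl|rfl|rfl <;> assumption
  have hcf1 : cf ≠ x1 := by rcases hcfm with rfl|rfl|rfl <;> assumption
  have k1 : d ≠ ue := by intro hh; subst hh; exact sdy hyue.symm
  have k2 : d ≠ ve := by intro hh; subst hh; exact sdz hzve.symm
  have k3 : d ≠ ce := by intro hh; subst hh; exact spd hpce
  have k4 : d ≠ cf := by intro hh; subst hh; exact sqd hqcf
  have k5 : ue ≠ ve := by intro hh; subst hh; exact no4 h6 hyue.symm hy2.symm hz2 hzve hue2 hyz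
  have k6 : ue ≠ ce := by intro hh; subst hh; exact no5 h6 hyue.symm hy2.symm a12.symm hp1 hpce hue2 nue1 hy_1 nyp hp_2.symm
  have k7 : ue ≠ cf := by intro hh; subst hh; exact no5 h6 hyue.symm hy2.symm a12.symm hq1 hqcf hue2 nue1 hy_1 nyq hq_2.symm
  have k8 : ve ≠ ce := by intro hh; subst hh; exact no5 h6 hzve.symm hz2.symm a12.symm hp1 hpce hve2 nve1 hz_1 nzp hp_2.symm
  have k9 : ve ≠ cf := by intro hh; subst hh; exact no5 h6 hzve.symm hz2.symm a12.symm hq1 hqcf hve2 nve1 hz_1 nzq hq_2.symm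
  have k10 : ce ≠ cf := by intro hh; subst hh; exact no4 h6 hpce.symm hp1.symm hq1 hqcf hce1 hpq
  exact (five_nbrs G (hdeg e) hde.symm hue_e.symm hve_e.symm hce_e.symm hcf_e.symm k1 k2 k3 k4 k5 k6 k7 k8 k9 k10).elim

end GrundyAux

theorem fourRegular_girth_six_grundy {V : Type*} [Fintype V]
    (G : SimpleGraph V) [DecidableRel G.Adj]
    (hreg : G.IsRegularOfDegree 4) (hg : G.girth = 6) :
    grundy G = 5 := by
  have h5 : GrundyColorable G 5 := lower G hreg hg
  have hub : ∀ k ∈ {k | GrundyColorable G k}, k ≤ 5 := fun k hk => upper G hreg k hk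
  exact IsGreatest.csSup_eq ⟨h5, hub⟩
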